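/- arXiv:1610.03776 — 4 statements merged into one kernel-verified Lean document; each statement's English description precedes it below -/
import Mathlib

section
/- Let ε_N = (ε_1,…,ε_N) be a Poisson sampling scheme with first-order inclusion probabilities p_1,…,p_N ∈ (0,1), and let x_1,…,x_N be fixed real numbers, not all zero. Set A = Σ_{i=1}^N ((1−p_i)/p_i) x_i² and B = max_{1≤i≤N} |x_i|/p_i. Then for every t > 0 and every N ≥ 1, P{ Ŝ_p − S_N > t } ≤ exp( −(A/B²) · H( tB/A ) ), where H(x) = (1+x)log(1+x) − x. -/
open MeasureTheory ProbabilityTheory Real Finset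

/-- `H(x) = (1+x)log(1+x) - x`. -/
noncomputable def entH (x : ℝ) : ℝ := (1 + x) * Real.log (1 + x) - x

lemma intRep (z : ℝ) :
    Real.exp z - 1 - z = z ^ 2 * ∫ u in (0:ℝ)..1, (1 - u) * Real.exp (u * z) := by
  rcases eq_or_ne z 0 with hz | hz
  · simp [hz]
  · have hF : ∀ u : ℝ, HasDerivAt (fun u : ℝ => Real.exp (u * z) * ((1 - u) / z + 1 / z ^ 2))
        ((1 - u) * Real.exp (u * z)) u := by
      intro u
      have h1 : HasDerivAt (fun u : ℝ => Real.exp (u * z)) (Real.exp (u * z) * z) u :=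
        (hasDerivAt_mul_const z).exp
      have h2 : HasDerivAt (fun u : ℝ => (1 - u) / z + 1 / z ^ 2) (-(1 / z)) u := by
        have : HasDerivAt (fun u : ℝ => (1 - u) / z + 1 / z ^ 2) ((0 - 1) / z + 0) u :=
          (((hasDerivAt_const u (1:ℝ)).sub (hasDerivAt_id u)).div_const z).add
            (hasDerivAt_const u _)
        convert this using 1; ring
      have : HasDerivAt (fun u : ℝ => Real.exp (u * z) * ((1 - u) / z + 1 / z ^ 2)) _ u :=
        h1.mul h2
      convert this using 1
      field_simp
      ring
    have hcont : Continuous fun u : ℝ => (1 - u) * Real.exp (u * z) :=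
      (continuous_const.sub continuous_id).mul ((continuous_id.mul continuous_const).rexp)
    rw [intervalIntegral.integral_eq_sub_of_hasDerivAt (fun u _ => hF u)
      (hcont.intervalIntegrable _ _)]
    simp only [one_mul, zero_mul, Real.exp_zero]
    field_simp
    ring

lemma exp_quad {c y : ℝ} (hc : 0 < c) (hy : y ≤ c) :
    Real.exp y ≤ 1 + y + y ^ 2 * ((Real.exp c - 1 - c) / c ^ 2) := by
  have hmono : (∫ u in (0:ℝ)..1, (1 - u) * Real.exp (u * y))
      ≤ ∫ u in (0:ℝ)..1, (1 - u) * Real.exp (u * c) := by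
    apply intervalIntegral.integral_mono_on zero_le_one
    · exact ((continuous_const.sub continuous_id).mul
        ((continuous_id.mul continuous_const).rexp)).intervalIntegrable _ _
    · exact ((continuous_const.sub continuous_id).mul
        ((continuous_id.mul continuous_const).rexp)).intervalIntegrable _ _
    · intro u hu
      rcases hu with ⟨hu0, hu1⟩
      have h1 : (0:ℝ) ≤ 1 - u := by linarith
      have h2 : u * y ≤ u * c := mul_le_mul_of_nonneg_left hy hu0
      exact mul_le_mul_of_nonneg_left (Real.exp_le_exp.2 h2) h1
  have h1 := intRep y
  have h2 := intRep c
  have hc2 : (Real.exp c - 1 - c) / c ^ 2 = ∫ u in (0:ℝ)..1, (1 - u) * Real.exp (u * c) := by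
    rw [h2]; field_simp
  have : Real.exp y - 1 - y ≤ y ^ 2 * ((Real.exp c - 1 - c) / c ^ 2) := by
    rw [h1, hc2]
    exact mul_le_mul_of_nonneg_left hmono (sq_nonneg y)
  linarith

lemma bernoulli_integral {Ω : Type*} [MeasurableSpace Ω] {μ : Measure Ω}
    [IsProbabilityMeasure μ]
    (e : Ω → ℝ) (he : Measurable e) (h01 : ∀ ω, e ω = 0 ∨ e ω = 1)
    (q : ℝ) (hq0 : 0 ≤ q) (hlaw : μ {ω | e ω = 1} = ENNReal.ofReal q) (f : ℝ → ℝ) :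
    ∫ ω, f (e ω) ∂μ = (1 - q) * f 0 + q * f 1 := by
  set S : Set Ω := {ω | e ω = 1} with hS
  have hSm : MeasurableSet S := he (measurableSet_singleton 1)
  have hind : e = S.indicator (fun _ => (1:ℝ)) := by
    funext ω
    rcases h01 ω with h | h
    · rw [h, Set.indicator_apply]
      have : ω ∉ S := by simp [hS, Set.mem_setOf_eq, h]
      simp [this]
    · rw [h, Set.indicator_apply]
      have : ω ∈ S := h
      simp [this]
  have hinte : Integrable e μ := by
    rw [hind]; exact (integrable_const (1:ℝ)).indicator hSm
  have hie : ∫ ω, e ω ∂μ = q := by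
    rw [hind]
    have : ∫ ω, S.indicator (fun _ => (1:ℝ)) ω ∂μ = (μ S).toReal :=
      MeasureTheory.integral_indicator_one hSm
    rw [this, hlaw, ENNReal.toReal_ofReal hq0]
  have hfe : (fun ω => f (e ω)) = fun ω => f 0 + (f 1 - f 0) * e ω := by
    funext ω
    rcases h01 ω with h | h <;> rw [h] <;> ring
  rw [hfe, integral_add (integrable_const _) (hinte.const_mul _), integral_const,
    integral_const_mul, hie]
  simp [measure_univ]
  ring

lemma two_point_bound {p x l B : ℝ} (hp0 : 0 < p) (hp1 : p < 1) (hl : 0 < l)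
    (hB0 : 0 < B) (hBx : |x| / p ≤ B) :
    (1 - p) * Real.exp (l * ((0 / p) * x - x)) + p * Real.exp (l * ((1 / p) * x - x))
      ≤ Real.exp (((1 - p) / p * x ^ 2) * ((Real.exp (l * B) - 1 - l * B) / B ^ 2)) := by
  have hxabs : x ≤ |x| := le_abs_self x
  have hxabs' : -x ≤ |x| := neg_le_abs x
  have hxB : |x| ≤ B * p := by
    rw [div_le_iff₀ hp0] at hBx; exact hBx
  set c : ℝ := l * B with hc
  have hc0 : 0 < c := mul_pos hl hB0
  set K : ℝ := (Real.exp c - 1 - c) / c ^ 2 with hK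
  have hy1 : l * ((0 / p) * x - x) ≤ c := by
    have : -x ≤ B := by nlinarith
    have h : (0 / p) * x - x = -x := by field_simp; ring
    rw [h]
    exact mul_le_mul_of_nonneg_left this hl.le
  have hy2 : l * ((1 / p) * x - x) ≤ c := by
    have h : (1 / p) * x - x = x * (1 - p) / p := by field_simp
    rw [h]
    have : x * (1 - p) / p ≤ B := by
      rw [div_le_iff₀ hp0]
      nlinarith
    exact mul_le_mul_of_nonneg_left this hl.le
  have e1 := exp_quad hc0 hy1
  have e2 := exp_quad hc0 hy2
  have hsum : (1 - p) * Real.exp (l * ((0 / p) * x - x)) + p * Real.exp (l * ((1 / p) * x - x))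
      ≤ 1 + ((1 - p) / p * x ^ 2) * (l ^ 2 * K) := by
    have h1p : (0:ℝ) ≤ 1 - p := by linarith
    have b1 := mul_le_mul_of_nonneg_left e1 h1p
    have b2 := mul_le_mul_of_nonneg_left e2 hp0.le
    have key : (1 - p) * (1 + l * ((0 / p) * x - x) + (l * ((0 / p) * x - x)) ^ 2 * K)
        + p * (1 + l * ((1 / p) * x - x) + (l * ((1 / p) * x - x)) ^ 2 * K)
        = 1 + ((1 - p) / p * x ^ 2) * (l ^ 2 * K) := by
      field_simp
      ring
    linarith
  have hKeq : ((1 - p) / p * x ^ 2) * (l ^ 2 * K)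
      = ((1 - p) / p * x ^ 2) * ((Real.exp (l * B) - 1 - l * B) / B ^ 2) := by
    rw [hK, hc]
    field_simp
  calc (1 - p) * Real.exp (l * ((0 / p) * x - x)) + p * Real.exp (l * ((1 / p) * x - x))
      ≤ 1 + ((1 - p) / p * x ^ 2) * (l ^ 2 * K) := hsum
    _ ≤ Real.exp (((1 - p) / p * x ^ 2) * (l ^ 2 * K)) := by
        linarith [Real.add_one_le_exp (((1 - p) / p * x ^ 2) * (l ^ 2 * K))]
    _ = _ := by rw [hKeq]

/-- Bennett inequality for the Horvitz–Thompson estimator under Poisson sampling. -/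
theorem poisson_bennett
    {Ω : Type*} [MeasurableSpace Ω] (μ : Measure Ω) [IsProbabilityMeasure μ]
    {N : ℕ} (hN : 1 ≤ N) (ε : Ω → Fin N → ℝ) (p x : Fin N → ℝ)
    (hmeas : ∀ i, Measurable fun ω => ε ω i)
    (h01 : ∀ ω i, ε ω i = 0 ∨ ε ω i = 1)
    (hp : ∀ i, 0 < p i ∧ p i < 1)
    (hindep : iIndepFun (fun i ω => ε ω i) μ)
    (hlaw : ∀ i, μ {ω | ε ω i = 1} = ENNReal.ofReal (p i))
    (hx : ∃ i, x i ≠ 0)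
    (A B : ℝ)
    (hA : A = ∑ i, ((1 - p i) / p i) * x i ^ 2)
    (hB : IsGreatest (Set.range fun i => |x i| / p i) B)
    (t : ℝ) (ht : 0 < t) :
    μ {ω | ∑ i, (ε ω i / p i) * x i - ∑ i, x i > t}
      ≤ ENNReal.ofReal (Real.exp (-(A / B ^ 2) * entH (t * B / A))) := by
  obtain ⟨i₀, hxi₀⟩ := hx
  have hBmem : ∀ i, |x i| / p i ≤ B := fun i => hB.2 ⟨i, rfl⟩
  have hB0 : 0 < B :=
    lt_of_lt_of_le (div_pos (abs_pos.2 hxi₀) (hp i₀).1) (hBmem i₀)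
  have hA0 : 0 < A := by
    rw [hA]
    refine Finset.sum_pos' (fun i _ => ?_) ⟨i₀, Finset.mem_univ i₀, ?_⟩
    · exact mul_nonneg (div_nonneg (by linarith [(hp i).2]) (hp i).1.le) (sq_nonneg _)
    · exact mul_pos (div_pos (by linarith [(hp i₀).2]) (hp i₀).1)
        (by positivity)
  set l : ℝ := Real.log (1 + t * B / A) / B with hldef
  have hu0 : 0 < t * B / A := div_pos (mul_pos ht hB0) hA0
  have hl : 0 < l := div_pos (Real.log_pos (by linarith)) hB0
  set Y : Fin N → Ω → ℝ := fun i ω => (ε ω i / p i) * x i - x i with hYdef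
  have hYmeas : ∀ i, Measurable (Y i) := fun i =>
    (((hmeas i).div_const _).mul_const _).sub_const _
  have hYindep : iIndepFun Y μ := by
    have h := hindep.comp (fun i s => (s / p i) * x i - x i)
      (fun i => ((measurable_id.div_const _).mul_const _).sub_const _)
    exact h
  have hmgf : ∀ i, mgf (Y i) μ l = (1 - p i) * Real.exp (l * ((0 / p i) * x i - x i))
      + p i * Real.exp (l * ((1 / p i) * x i - x i)) := by
    intro i
    exact bernoulli_integral (fun ω => ε ω i) (hmeas i) (fun ω => h01 ω i) (p i) (hp i).1.le
      (hlaw i) (fun s => Real.exp (l * ((s / p i) * x i - x i)))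
  set C : ℝ := (Real.exp (l * B) - 1 - l * B) / B ^ 2 with hCdef
  have hbound : ∀ i, mgf (Y i) μ l ≤ Real.exp (((1 - p i) / p i * x i ^ 2) * C) := by
    intro i
    rw [hmgf i]
    exact two_point_bound (hp i).1 (hp i).2 hl hB0 (hBmem i)
  have hprod : mgf (∑ i, Y i) μ l ≤ Real.exp (A * C) := by
    rw [hYindep.mgf_sum hYmeas]
    calc ∏ i, mgf (Y i) μ l ≤ ∏ i, Real.exp (((1 - p i) / p i * x i ^ 2) * C) :=
        Finset.prod_le_prod (fun i _ => mgf_nonneg) (fun i _ => hbound i)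
      _ = Real.exp (∑ i, ((1 - p i) / p i * x i ^ 2) * C) := by rw [Real.exp_sum]
      _ = Real.exp (A * C) := by rw [← Finset.sum_mul, hA]
  have hXapp : ∀ ω, (∑ i, Y i) ω = ∑ i, Y i ω := fun ω => Finset.sum_apply ω Finset.univ Y
  have hXmeas : Measurable (∑ i, Y i) := by
    have : (∑ i, Y i) = fun ω => ∑ i, Y i ω := funext hXapp
    rw [this]
    exact Finset.measurable_sum _ fun i _ => hYmeas i
  have hYleB : ∀ i ω, Y i ω ≤ B := by
    intro i ω
    have hpB := hBmem i
    have h1 := (hp i).1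
    have h2 := (hp i).2
    have hdiv : |x i| ≤ B * p i := by rw [div_le_iff₀ h1] at hpB; exact hpB
    rcases h01 ω i with h | h <;> simp only [hYdef, h]
    · have hx1 : -x i ≤ |x i| := neg_le_abs _
      have h0 : (0:ℝ) / p i * x i - x i = -x i := by field_simp; ring
      rw [h0]
      nlinarith [abs_nonneg (x i)]
    · have hx1 : x i ≤ |x i| := le_abs_self _
      rw [sub_le_iff_le_add, div_mul_eq_mul_div, div_le_iff₀ h1]
      nlinarith [abs_nonneg (x i)]
  have hint : Integrable (fun ω => Real.exp (l * (∑ i, Y i) ω)) μ := by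
    apply Integrable.mono' (integrable_const (Real.exp (l * (N * B))))
    · exact ((hXmeas.const_mul l).exp).aestronglyMeasurable
    · filter_upwards with ω
      rw [Real.norm_eq_abs, Real.abs_exp]
      apply Real.exp_le_exp.2
      apply mul_le_mul_of_nonneg_left _ hl.le
      rw [hXapp ω]
      calc ∑ i, Y i ω ≤ ∑ _i : Fin N, B := Finset.sum_le_sum fun i _ => hYleB i ω
        _ = N * B := by rw [Finset.sum_const, Finset.card_univ, Fintype.card_fin,
            nsmul_eq_mul]
  have hcher := measure_ge_le_exp_mul_mgf (X := ∑ i, Y i) (μ := μ) t hl.le hint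
  have hsub : {ω | ∑ i, (ε ω i / p i) * x i - ∑ i, x i > t} ⊆ {ω | t ≤ (∑ i, Y i) ω} := by
    intro ω hω
    simp only [Set.mem_setOf_eq] at hω ⊢
    rw [hXapp ω]
    have hsd : ∑ i, Y i ω = ∑ i, (ε ω i / p i) * x i - ∑ i, x i := by
      rw [← Finset.sum_sub_distrib]
    linarith
  have hlB : l * B = Real.log (1 + t * B / A) := by
    rw [hldef]; field_simp
  have hexp : Real.exp (l * B) = 1 + t * B / A := by
    rw [hlB, Real.exp_log (by linarith)]
  have hrhs : Real.exp (-l * t) * Real.exp (A * C)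
      = Real.exp (-(A / B ^ 2) * entH (t * B / A)) := by
    rw [← Real.exp_add]
    congr 1
    rw [hCdef, hexp, hlB, hldef, entH]
    field_simp
    ring
  calc μ {ω | ∑ i, (ε ω i / p i) * x i - ∑ i, x i > t}
      ≤ μ {ω | t ≤ (∑ i, Y i) ω} := measure_mono hsub
    _ = ENNReal.ofReal (μ {ω | t ≤ (∑ i, Y i) ω}).toReal :=
        (ENNReal.ofReal_toReal (measure_ne_top _ _)).symm
    _ ≤ ENNReal.ofReal (Real.exp (-l * t) * mgf (∑ i, Y i) μ l) :=
        ENNReal.ofReal_le_ofReal hcher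
    _ ≤ ENNReal.ofReal (Real.exp (-l * t) * Real.exp (A * C)) :=
        ENNReal.ofReal_le_ofReal (mul_le_mul_of_nonneg_left hprod (Real.exp_pos _).le)
    _ = _ := by rw [hrhs]
end

section
/- Let Z_1,…,Z_N be square-integrable negatively associated real-valued random variables with E[Z_i] = 0 and |Z_i| ≤ c almost surely (c > 0) for 1 ≤ i ≤ N, and let a_1,…,a_N be constants with 0 ≤ a_i ≤ 1. Set σ² = (1/N) Σ_{i=1}^N a_i² Var(Z_i) and assume σ² > 0. Then for all t > 0 and all N ≥ 1, P{ Σ_{i=1}^N a_i Z_i ≥ t } ≤ exp( −(Nσ²/c²) · H( ct/(Nσ²) ) ), where H(x) = (1+x)log(1+x) − x. -/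
open MeasureTheory ProbabilityTheory Real Finset
open Nat
set_option maxHeartbeats 1600000

/-- Negative association of a finite family of real random variables: for all disjoint
index sets and all bounded measurable coordinatewise-nondecreasing functions, the
covariance is nonpositive. -/
def NegAssoc {Ω : Type*} [MeasurableSpace Ω] (μ : Measure Ω) {N : ℕ}
    (Z : Fin N → Ω → ℝ) : Prop :=
  ∀ A₁ A₂ : Finset (Fin N), Disjoint A₁ A₂ →
    ∀ f : ({i // i ∈ A₁} → ℝ) → ℝ, ∀ g : ({i // i ∈ A₂} → ℝ) → ℝ,
      Measurable f → Measurable g →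
      (∃ C, ∀ y, |f y| ≤ C) → (∃ C, ∀ y, |g y| ≤ C) →
      Monotone f → Monotone g →
      ∫ ω, f (fun i => Z i.1 ω) * g (fun j => Z j.1 ω) ∂μ ≤
        (∫ ω, f (fun i => Z i.1 ω) ∂μ) * ∫ ω, g (fun j => Z j.1 ω) ∂μ

lemma exp_sub_one_sub_eq_tsum (y : ℝ) :
    Real.exp y - 1 - y = ∑' n : ℕ, y ^ (n + 2) / (n + 2)! := by
  have h : Real.exp y = ∑' n : ℕ, y ^ n / n ! := by
    rw [Real.exp_eq_exp_ℝ, NormedSpace.exp_eq_tsum_div]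
  have hs := Real.summable_pow_div_factorial y
  have hs1 : Summable (fun n : ℕ => y ^ (n + 1) / (n + 1)!) :=
    (summable_nat_add_iff 1).2 hs
  rw [h, Summable.tsum_eq_zero_add hs, Summable.tsum_eq_zero_add hs1]
  simp [Nat.factorial]

lemma exp_quadratic_bound {x b : ℝ} (hb : 0 < b) (hx : |x| ≤ b) :
    Real.exp x ≤ 1 + x + x ^ 2 * ((Real.exp b - 1 - b) / b ^ 2) := by
  have h1 : Real.exp x - 1 - x ≤ x ^ 2 / b ^ 2 * (Real.exp b - 1 - b) := by
    rw [exp_sub_one_sub_eq_tsum, exp_sub_one_sub_eq_tsum]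
    have hsx : Summable (fun n : ℕ => x ^ (n + 2) / ((n + 2)! : ℝ)) :=
      (summable_nat_add_iff 2).2 (Real.summable_pow_div_factorial x)
    have hsb : Summable (fun n : ℕ => b ^ (n + 2) / ((n + 2)! : ℝ)) :=
      (summable_nat_add_iff 2).2 (Real.summable_pow_div_factorial b)
    rw [← tsum_mul_left]
    refine Summable.tsum_le_tsum (fun n => ?_) hsx (hsb.mul_left _)
    have hterm : x ^ (n + 2) ≤ x ^ 2 / b ^ 2 * b ^ (n + 2) := by
      have h2 : x ^ (n + 2) ≤ |x| ^ (n + 2) := by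
        calc x ^ (n + 2) ≤ |x ^ (n + 2)| := le_abs_self _
        _ = |x| ^ (n + 2) := by rw [abs_pow]
      have h3 : |x| ^ (n + 2) = |x| ^ n * |x| ^ 2 := by ring
      have h4 : |x| ^ n * |x| ^ 2 ≤ b ^ n * x ^ 2 := by
        rw [sq_abs]
        exact mul_le_mul_of_nonneg_right (pow_le_pow_left₀ (abs_nonneg x) hx n) (sq_nonneg x)
      have h5 : x ^ 2 / b ^ 2 * b ^ (n + 2) = b ^ n * x ^ 2 := by
        field_simp
        ring
      rw [h5]
      exact h2.trans (h3 ▸ h4)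
    calc x ^ (n + 2) / ((n + 2)! : ℝ)
        ≤ (x ^ 2 / b ^ 2 * b ^ (n + 2)) / ((n + 2)! : ℝ) := by
          exact div_le_div_of_nonneg_right hterm (by positivity)
      _ = x ^ 2 / b ^ 2 * (b ^ (n + 2) / ((n + 2)! : ℝ)) := by ring
  have h2 : x ^ 2 * ((Real.exp b - 1 - b) / b ^ 2) = x ^ 2 / b ^ 2 * (Real.exp b - 1 - b) := by
    ring
  linarith

lemma na_prod_exp_le {Ω : Type*} [MeasurableSpace Ω] (μ : Measure Ω)
    [IsProbabilityMeasure μ] {N : ℕ} (Z : Fin N → Ω → ℝ) (hNA : NegAssoc μ Z)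
    (c : ℝ) (b : Fin N → ℝ) (hb : ∀ i, 0 ≤ b i) :
    ∀ A : Finset (Fin N),
      ∫ ω, ∏ i ∈ A, Real.exp (b i * min (Z i ω) c) ∂μ ≤
        ∏ i ∈ A, ∫ ω, Real.exp (b i * min (Z i ω) c) ∂μ := by
  intro A
  induction A using Finset.cons_induction with
  | empty => simp
  | cons i s hi IH =>
    set f : ({j // j ∈ ({i} : Finset (Fin N))} → ℝ) → ℝ :=
      fun y => Real.exp (b i * min (y ⟨i, Finset.mem_singleton_self i⟩) c) with hf
    set g : ({j // j ∈ s} → ℝ) → ℝ :=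
      fun y => ∏ j ∈ s.attach, Real.exp (b j.1 * min (y j) c) with hg
    have hdisj : Disjoint ({i} : Finset (Fin N)) s := by simpa using hi
    have hmf : Measurable f :=
      (Real.measurable_exp.comp
        (measurable_const.mul ((measurable_pi_apply _).min measurable_const)))
    have hmg : Measurable g :=
      Finset.measurable_prod _ (fun j _ =>
        Real.measurable_exp.comp
          (measurable_const.mul ((measurable_pi_apply _).min measurable_const)))
    have hbf : ∃ C, ∀ y, |f y| ≤ C := by
      refine ⟨Real.exp (b i * c), fun y => ?_⟩
      rw [abs_of_nonneg (Real.exp_nonneg _)]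
      exact Real.exp_le_exp.2 (mul_le_mul_of_nonneg_left (min_le_right _ _) (hb i))
    have hbg : ∃ C, ∀ y, |g y| ≤ C := by
      refine ⟨∏ j ∈ s.attach, Real.exp (b j.1 * c), fun y => ?_⟩
      rw [abs_of_nonneg (Finset.prod_nonneg fun j _ => Real.exp_nonneg _)]
      exact Finset.prod_le_prod (fun j _ => (Real.exp_nonneg _))
        (fun j _ => Real.exp_le_exp.2
          (mul_le_mul_of_nonneg_left (min_le_right _ _) (hb j.1)))
    have hmonf : Monotone f := by
      intro y y' hy
      exact Real.exp_le_exp.2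
        (mul_le_mul_of_nonneg_left (min_le_min (hy _) le_rfl) (hb i))
    have hmong : Monotone g := by
      intro y y' hy
      exact Finset.prod_le_prod (fun j _ => Real.exp_nonneg _)
        (fun j _ => Real.exp_le_exp.2
          (mul_le_mul_of_nonneg_left (min_le_min (hy _) le_rfl) (hb j.1)))
    have key := hNA {i} s hdisj f g hmf hmg hbf hbg hmonf hmong
    have hfz : (fun ω => f (fun k => Z k.1 ω)) =
        fun ω => Real.exp (b i * min (Z i ω) c) := rfl
    have hgz : (fun ω => g (fun j => Z j.1 ω)) =
        fun ω => ∏ j ∈ s, Real.exp (b j * min (Z j ω) c) := by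
      funext ω
      exact Finset.prod_attach s (fun j => Real.exp (b j * min (Z j ω) c))
    have hfnn : 0 ≤ ∫ ω, Real.exp (b i * min (Z i ω) c) ∂μ :=
      integral_nonneg fun ω => Real.exp_nonneg _
    calc ∫ ω, ∏ j ∈ Finset.cons i s hi, Real.exp (b j * min (Z j ω) c) ∂μ
        = ∫ ω, f (fun k => Z k.1 ω) * g (fun j => Z j.1 ω) ∂μ := by
          refine integral_congr_ae (Filter.Eventually.of_forall fun ω => ?_)
          show ∏ j ∈ Finset.cons i s hi, Real.exp (b j * min (Z j ω) c) =
            (f fun k => Z (↑k) ω) * g fun j => Z (↑j) ω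
          rw [Finset.prod_cons]
          congr 1
          exact (Finset.prod_attach s fun j => Real.exp (b j * min (Z j ω) c)).symm
      _ ≤ (∫ ω, f (fun k => Z k.1 ω) ∂μ) * ∫ ω, g (fun j => Z j.1 ω) ∂μ := key
      _ = (∫ ω, Real.exp (b i * min (Z i ω) c) ∂μ) *
            ∫ ω, ∏ j ∈ s, Real.exp (b j * min (Z j ω) c) ∂μ := by rw [hfz, hgz]
      _ ≤ (∫ ω, Real.exp (b i * min (Z i ω) c) ∂μ) *
            ∏ j ∈ s, ∫ ω, Real.exp (b j * min (Z j ω) c) ∂μ :=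
          mul_le_mul_of_nonneg_left IH hfnn
      _ = ∏ j ∈ Finset.cons i s hi, ∫ ω, Real.exp (b j * min (Z j ω) c) ∂μ := by
          rw [Finset.prod_cons]

/-- Bennett inequality for sums of bounded, centered, negatively associated random
variables. -/
theorem negAssoc_bennett
    {Ω : Type*} [MeasurableSpace Ω] (μ : Measure Ω) [IsProbabilityMeasure μ]
    {N : ℕ} (hN : 1 ≤ N) (Z : Fin N → Ω → ℝ) (hmeas : ∀ i, Measurable (Z i))
    (hL2 : ∀ i, MemLp (Z i) 2 μ)
    (hNA : NegAssoc μ Z)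
    (c : ℝ) (hc : 0 < c) (hbd : ∀ i, ∀ᵐ ω ∂μ, |Z i ω| ≤ c)
    (hmean : ∀ i, ∫ ω, Z i ω ∂μ = 0)
    (a : Fin N → ℝ) (ha : ∀ i, 0 ≤ a i ∧ a i ≤ 1)
    (σ2 : ℝ) (hσ2 : σ2 = (1 / (N : ℝ)) * ∑ i, a i ^ 2 * variance (Z i) μ)
    (hσpos : 0 < σ2)
    (t : ℝ) (ht : 0 < t) :
    μ {ω | ∑ i, a i * Z i ω ≥ t}
      ≤ ENNReal.ofReal
          (Real.exp (-((N : ℝ) * σ2 / c ^ 2) * entH (c * t / ((N : ℝ) * σ2)))) := by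
  have hNpos : (0 : ℝ) < N := by exact_mod_cast hN
  set v : ℝ := (N : ℝ) * σ2 with hv
  have hvpos : 0 < v := mul_pos hNpos hσpos
  set u : ℝ := c * t / v with hu
  have hupos : 0 < u := div_pos (mul_pos hc ht) hvpos
  set L : ℝ := Real.log (1 + u) with hLdef
  have hLpos : 0 < L := Real.log_pos (by linarith)
  have hexpL : Real.exp L = 1 + u := Real.exp_log (by linarith)
  set lam : ℝ := L / c with hlam
  have hlampos : 0 < lam := div_pos hLpos hc
  have hlamc : lam * c = L := div_mul_cancel₀ L hc.ne'
  set b : Fin N → ℝ := fun i => lam * a i with hb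
  have hbnn : ∀ i, 0 ≤ b i := fun i => mul_nonneg hlampos.le (ha i).1
  set S : Ω → ℝ := fun ω => ∑ i, a i * Z i ω with hS
  have hSmeas : Measurable S :=
    Finset.measurable_sum _ fun i _ => (hmeas i).const_mul (a i)
  have hae : ∀ᵐ ω ∂μ, ∀ i, |Z i ω| ≤ c := (MeasureTheory.ae_all_iff).2 hbd
  -- integrability of exp(lam * S)
  have hint : Integrable (fun ω => Real.exp (lam * S ω)) μ := by
    refine Integrable.mono' (integrable_const (Real.exp (lam * ((N : ℝ) * c)))) ?_ ?_
    · exact (Real.measurable_exp.comp (hSmeas.const_mul lam)).aestronglyMeasurable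
    · filter_upwards [hae] with ω hω
      rw [Real.norm_eq_abs, abs_of_nonneg (Real.exp_nonneg _)]
      refine Real.exp_le_exp.2 (mul_le_mul_of_nonneg_left ?_ hlampos.le)
      calc S ω ≤ ∑ i : Fin N, c := by
            refine Finset.sum_le_sum fun i _ => ?_
            calc a i * Z i ω ≤ |a i * Z i ω| := le_abs_self _
              _ = a i * |Z i ω| := by rw [abs_mul, abs_of_nonneg (ha i).1]
              _ ≤ 1 * c := mul_le_mul (ha i).2 (hω i) (abs_nonneg _) zero_le_one
              _ = c := one_mul c
        _ = (N : ℝ) * c := by simp [mul_comm]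
  -- Chernoff
  have hch := measure_ge_le_exp_mul_mgf (μ := μ) (X := S) (t := lam) t hlampos.le hint
  -- mgf S μ lam ≤ ∏ i, ∫ exp (b i * Z i)
  have hmgf1 : mgf S μ lam = ∫ ω, ∏ i, Real.exp (b i * min (Z i ω) c) ∂μ := by
    refine integral_congr_ae ?_
    filter_upwards [hae] with ω hω
    have hmin : ∀ i : Fin N, min (Z i ω) c = Z i ω :=
      fun i => min_eq_left (le_of_abs_le (hω i))
    rw [← Real.exp_sum]
    congr 1
    rw [hS, Finset.mul_sum]
    exact Finset.sum_congr rfl fun i _ => by rw [hmin i]; ring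
  have hmgf2 := na_prod_exp_le μ Z hNA c b hbnn Finset.univ
  have hmgf3 : ∀ i : Fin N, ∫ ω, Real.exp (b i * min (Z i ω) c) ∂μ =
      ∫ ω, Real.exp (b i * Z i ω) ∂μ := by
    intro i
    refine integral_congr_ae ?_
    filter_upwards [hbd i] with ω hω
    rw [min_eq_left (le_of_abs_le hω)]
  -- per-variable bound
  set D : ℝ := Real.exp L - 1 - L with hD
  have hKpos : (0:ℝ) ≤ D / L ^ 2 := by
    have : 1 + L ≤ Real.exp L := Real.add_one_le_exp L |>.trans_eq' (by ring)
    have hDnn : 0 ≤ D := by simp only [hD]; linarith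
    positivity
  have hone : ∀ i : Fin N, ∫ ω, Real.exp (b i * Z i ω) ∂μ ≤
      Real.exp (a i ^ 2 * variance (Z i) μ * D / c ^ 2) := by
    intro i
    have hintexp : Integrable (fun ω => Real.exp (b i * Z i ω)) μ := by
      refine Integrable.mono' (integrable_const (Real.exp L)) ?_ ?_
      · exact (Real.measurable_exp.comp ((hmeas i).const_mul (b i))).aestronglyMeasurable
      · filter_upwards [hbd i] with ω hω
        rw [Real.norm_eq_abs, abs_of_nonneg (Real.exp_nonneg _)]
        refine Real.exp_le_exp.2 ?_
        calc b i * Z i ω ≤ |b i * Z i ω| := le_abs_self _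
          _ = lam * a i * |Z i ω| := by
              rw [abs_mul, abs_of_nonneg (hbnn i)]
          _ ≤ lam * 1 * c :=
              mul_le_mul (by nlinarith [(ha i).1, (ha i).2, hlampos.le]) hω
                (abs_nonneg _) (by nlinarith [hlampos.le])
          _ = L := by rw [mul_one, hlamc]
    have hZint : Integrable (Z i) μ := (hL2 i).integrable one_le_two
    have hZ2int : Integrable (fun ω => (Z i ω) ^ 2) μ := by
      simpa [sq] using ((hL2 i).integrable_sq)
    have hptwise : ∀ᵐ ω ∂μ, Real.exp (b i * Z i ω) ≤
        1 + b i * Z i ω + (b i * Z i ω) ^ 2 * (D / L ^ 2) := by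
      filter_upwards [hbd i] with ω hω
      refine exp_quadratic_bound hLpos ?_
      calc |b i * Z i ω| = lam * a i * |Z i ω| := by
            rw [abs_mul, abs_of_nonneg (hbnn i)]
        _ ≤ lam * 1 * c :=
            mul_le_mul (by nlinarith [(ha i).1, (ha i).2, hlampos.le]) (hω)
              (abs_nonneg _) (by nlinarith [hlampos.le])
        _ = L := by rw [mul_one, hlamc]
    have hrhsint : Integrable
        (fun ω => 1 + b i * Z i ω + (b i * Z i ω) ^ 2 * (D / L ^ 2)) μ := by
      refine Integrable.add (Integrable.add (integrable_const 1)
        (hZint.const_mul (b i))) ?_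
      have : (fun ω => (b i * Z i ω) ^ 2 * (D / L ^ 2)) =
          fun ω => (b i ^ 2 * (D / L ^ 2)) * (Z i ω) ^ 2 := by
        funext ω; ring
      rw [this]
      exact hZ2int.const_mul _
    have hVar : variance (Z i) μ = ∫ ω, (Z i ω) ^ 2 ∂μ := by
      rw [variance_eq_sub (hL2 i)]
      simp [hmean i, Pi.pow_apply]
    calc ∫ ω, Real.exp (b i * Z i ω) ∂μ
        ≤ ∫ ω, (1 + b i * Z i ω + (b i * Z i ω) ^ 2 * (D / L ^ 2)) ∂μ :=
          integral_mono_ae hintexp hrhsint hptwise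
      _ = 1 + b i ^ 2 * (D / L ^ 2) * ∫ ω, (Z i ω) ^ 2 ∂μ := by
          have h1 : (fun ω => 1 + b i * Z i ω + (b i * Z i ω) ^ 2 * (D / L ^ 2)) =
              fun ω => (1 + b i * Z i ω) + (b i ^ 2 * (D / L ^ 2)) * (Z i ω) ^ 2 := by
            funext ω; ring
          have hA : Integrable (fun ω => 1 + b i * Z i ω) μ := by
            simpa using (integrable_const (1 : ℝ)).add (hZint.const_mul (b i))
          have h2 : ∫ ω, ((1 + b i * Z i ω) + (b i ^ 2 * (D / L ^ 2)) * (Z i ω) ^ 2) ∂μ =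
              (∫ ω, (1 + b i * Z i ω) ∂μ) +
                (b i ^ 2 * (D / L ^ 2)) * ∫ ω, (Z i ω) ^ 2 ∂μ := by
            rw [integral_add hA (hZ2int.const_mul _), integral_const_mul]
          have h3 : ∫ ω, (1 + b i * Z i ω) ∂μ = 1 + b i * ∫ ω, Z i ω ∂μ := by
            rw [integral_add (integrable_const 1) (hZint.const_mul _),
              integral_const_mul]
            simp
          rw [h1, h2, h3, hmean i]
          ring
      _ = 1 + a i ^ 2 * variance (Z i) μ * D / c ^ 2 := by
          rw [← hVar]
          have hL2c : L ^ 2 = lam ^ 2 * c ^ 2 := by rw [← hlamc]; ring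
          field_simp [hb, hL2c]
          rw [show b i = lam * a i from rfl, hL2c]
          ring
      _ ≤ Real.exp (a i ^ 2 * variance (Z i) μ * D / c ^ 2) := by
          have := Real.add_one_le_exp (a i ^ 2 * variance (Z i) μ * D / c ^ 2)
          linarith
  -- combine the product
  have hsum : ∑ i, a i ^ 2 * variance (Z i) μ = v := by
    rw [hv, hσ2]; field_simp
  have hprod : ∏ i : Fin N, ∫ ω, Real.exp (b i * Z i ω) ∂μ ≤
      Real.exp (v * D / c ^ 2) := by
    calc ∏ i : Fin N, ∫ ω, Real.exp (b i * Z i ω) ∂μ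
        ≤ ∏ i : Fin N, Real.exp (a i ^ 2 * variance (Z i) μ * D / c ^ 2) :=
          Finset.prod_le_prod (fun i _ => integral_nonneg fun ω => Real.exp_nonneg _)
            (fun i _ => hone i)
      _ = Real.exp (∑ i, a i ^ 2 * variance (Z i) μ * D / c ^ 2) :=
          (Real.exp_sum _ _).symm
      _ = Real.exp (v * D / c ^ 2) := by
          congr 1
          rw [← hsum, Finset.sum_mul, Finset.sum_div]
  have hmgf : mgf S μ lam ≤ Real.exp (v * D / c ^ 2) := by
    rw [hmgf1]
    refine (hmgf2.trans_eq ?_).trans hprod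
    exact Finset.prod_congr rfl fun i _ => hmgf3 i
  -- final numeric identity
  have hteq : t = u * v / c := by
    rw [hu]; field_simp
  have hfinal : Real.exp (-lam * t) * Real.exp (v * D / c ^ 2) =
      Real.exp (-(v / c ^ 2) * entH u) := by
    rw [← Real.exp_add]
    congr 1
    rw [entH, hD, hexpL, hlam, hteq]
    field_simp
    ring
  -- conclude
  have hset : {ω | ∑ i, a i * Z i ω ≥ t} = {ω | t ≤ S ω} := rfl
  rw [hset]
  rw [ENNReal.le_ofReal_iff_toReal_le (measure_ne_top μ _) (Real.exp_nonneg _)]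
  calc (μ {ω | t ≤ S ω}).toReal ≤ Real.exp (-lam * t) * mgf S μ lam := hch
    _ ≤ Real.exp (-lam * t) * Real.exp (v * D / c ^ 2) :=
        mul_le_mul_of_nonneg_left hmgf (Real.exp_nonneg _)
    _ = Real.exp (-(v / c ^ 2) * entH u) := hfinal
    _ = Real.exp (-((N : ℝ) * σ2 / c ^ 2) * entH (c * t / ((N : ℝ) * σ2))) := by
        rw [hv, hu]
end

section
/- Let Z_1,…,Z_N be square-integrable negatively associated real-valued random variables with E[Z_i] = 0 and |Z_i| ≤ c almost surely (c > 0) for 1 ≤ i ≤ N, and let a_1,…,a_N be constants with 0 ≤ a_i ≤ 1. Set σ² = (1/N) Σ_{i=1}^N a_i² Var(Z_i). Then for all t > 0 and all N ≥ 1, P{ Σ_{i=1}^N a_i Z_i ≥ t } ≤ exp( −t² / ( 2Nσ² + (2/3)ct ) ). -/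
open MeasureTheory ProbabilityTheory Real Finset

lemma tail_summable (x : ℝ) : Summable (fun n : ℕ => x^(n+2)/(Nat.factorial (n+2))) := by
  exact (summable_nat_add_iff 2).2 (Real.summable_pow_div_factorial x)

lemma exp_sub_eq (x : ℝ) : Real.exp x - 1 - x = ∑' n : ℕ, x^(n+2)/(Nat.factorial (n+2)) := by
  have hs : Summable (fun n : ℕ => x^n / Nat.factorial n) := Real.summable_pow_div_factorial x
  have hexp : Real.exp x = ∑' n : ℕ, x^n / Nat.factorial n := by
    rw [Real.exp_eq_exp_ℝ, NormedSpace.exp_eq_tsum_div]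
  have h := Summable.sum_add_tsum_nat_add (f := fun n : ℕ => x^n / Nat.factorial n) 2 hs
  rw [hexp, ← h]
  simp [Finset.sum_range_succ]
  ring

/-- Lemma A -/
lemma expA {x u : ℝ} (hu : 0 < u) (hx : |x| ≤ u) :
    Real.exp x - 1 - x ≤ (x^2/u^2) * (Real.exp u - 1 - u) := by
  rw [exp_sub_eq x, exp_sub_eq u, ← tsum_mul_left]
  refine Summable.tsum_le_tsum (fun n => ?_) (tail_summable x)
    ((tail_summable u).mul_left _)
  have h1 : x^(n+2) ≤ x^2 * u^n := by
    calc x^(n+2) ≤ |x^(n+2)| := le_abs_self _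
    _ = |x|^2 * |x|^n := by rw [abs_pow]; ring
    _ ≤ x^2 * u^n := by
        rw [sq_abs]
        exact mul_le_mul_of_nonneg_left (pow_le_pow_left₀ (abs_nonneg x) hx n) (sq_nonneg x)
  have h2 : (x^2/u^2) * (u^(n+2)/(Nat.factorial (n+2))) = (x^2 * u^n)/(Nat.factorial (n+2)) := by
    field_simp
    ring
  rw [h2]
  exact div_le_div_of_nonneg_right h1 (by positivity) |>.trans_eq rfl

lemma fact_ge : ∀ n : ℕ, 2 * 3^n ≤ Nat.factorial (n+2)
  | 0 => by norm_num [Nat.factorial]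
  | (n+1) => by
      have ih := fact_ge n
      have : Nat.factorial (n+3) = (n+3) * Nat.factorial (n+2) := rfl
      calc 2 * 3^(n+1) = 3 * (2 * 3^n) := by ring
      _ ≤ 3 * Nat.factorial (n+2) := by omega
      _ ≤ (n+3) * Nat.factorial (n+2) := Nat.mul_le_mul_right _ (by omega)
      _ = Nat.factorial (n+3) := this.symm

/-- Lemma B -/
lemma expB {u : ℝ} (hu0 : 0 ≤ u) (hu3 : u < 3) :
    Real.exp u - 1 - u ≤ u^2 / (2 * (1 - u/3)) := by
  have hg : 0 ≤ u/3 := by linarith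
  have hg1 : u/3 < 1 := by linarith
  have hgeo : ∑' n : ℕ, (u/3)^n = (1 - u/3)⁻¹ := tsum_geometric_of_lt_one hg hg1
  have hrhs : u^2 / (2 * (1 - u/3)) = ∑' n : ℕ, (u^2/2) * (u/3)^n := by
    rw [tsum_mul_left, hgeo]
    field_simp
  rw [exp_sub_eq u, hrhs]
  refine Summable.tsum_le_tsum (fun n => ?_) (tail_summable u)
    ((summable_geometric_of_lt_one hg hg1).mul_left _)
  have h1 : (u^2/2) * (u/3)^n = u^(n+2) / (2 * 3^n) := by
    rw [div_pow]
    field_simp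
    ring
  rw [h1]
  apply div_le_div_of_nonneg_left (by positivity) (by positivity)
  exact_mod_cast fact_ge n

open MeasureTheory ProbabilityTheory

lemma expC {l a x c : ℝ} (hl : 0 ≤ l) (ha0 : 0 ≤ a) (ha1 : a ≤ 1) (hc : 0 < c)
    (hx : |x| ≤ c) :
    Real.exp (l * (a * x)) ≤
      1 + (l*a) * x + (a^2 * ((Real.exp (l*c) - 1 - l*c)/c^2)) * x^2 := by
  rcases eq_or_lt_of_le hl with h0 | hl
  · simp [← h0]
  · have hu : 0 < l * c := mul_pos hl hc
    have hax : |l * (a * x)| ≤ l * c := by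
      rw [abs_mul, abs_mul, abs_of_pos hl]
      have h1 : |a| * |x| ≤ c := by
        rw [abs_of_nonneg ha0]
        calc a * |x| ≤ 1 * |x| := mul_le_mul_of_nonneg_right ha1 (abs_nonneg x)
        _ ≤ c := by rwa [one_mul]
      exact mul_le_mul_of_nonneg_left h1 hl.le
    have hA := expA hu hax
    have heq : (l*(a*x))^2/(l*c)^2 = a^2*x^2/c^2 := by
      field_simp
    rw [heq] at hA
    have hr : a^2*x^2/c^2 * (Real.exp (l*c) - 1 - l*c)
        = a ^ 2 * ((Real.exp (l * c) - 1 - l * c) / c ^ 2) * x ^ 2 := by ring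
    rw [hr] at hA
    linarith

lemma mgfD {Ω : Type*} [MeasurableSpace Ω] (μ : Measure Ω) [IsProbabilityMeasure μ]
    (X : Ω → ℝ) (hm : Measurable X) (hL2 : MemLp X 2 μ) {c : ℝ} (hc : 0 < c)
    (hbd : ∀ᵐ ω ∂μ, |X ω| ≤ c) (hmean : ∫ ω, X ω ∂μ = 0)
    {a : ℝ} (ha0 : 0 ≤ a) (ha1 : a ≤ 1) {l : ℝ} (hl : 0 ≤ l) :
    ∫ ω, Real.exp (l * (a * X ω)) ∂μ ≤
      Real.exp (a^2 * variance X μ * ((Real.exp (l*c) - 1 - l*c)/c^2)) := by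
  set φ : ℝ := (Real.exp (l*c) - 1 - l*c)/c^2 with hφdef
  have hvar : variance X μ = ∫ ω, X ω^2 ∂μ := by
    rw [variance_eq_sub hL2, hmean]
    simp [sq]
  have hint1 : Integrable X μ := hL2.integrable one_le_two
  have hint2 : Integrable (fun ω => X ω^2) μ := by
    have := hL2.integrable_sq
    simpa [sq] using this
  have hmE : Measurable fun ω => Real.exp (l * (a * X ω)) :=
    (((hm.const_mul a).const_mul l).exp)
  have hintE : Integrable (fun ω => Real.exp (l * (a * X ω))) μ := by
    refine Integrable.mono' (integrable_const (Real.exp (l*c))) hmE.aestronglyMeasurable ?_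
    filter_upwards [hbd] with ω h
    rw [Real.norm_eq_abs, abs_of_pos (Real.exp_pos _)]
    apply Real.exp_le_exp.2
    have h1 : a * X ω ≤ c := by
      calc a * X ω ≤ a * |X ω| := by
            exact mul_le_mul_of_nonneg_left (le_abs_self _) ha0
      _ ≤ 1 * |X ω| := mul_le_mul_of_nonneg_right ha1 (abs_nonneg _)
      _ ≤ c := by rwa [one_mul]
    exact mul_le_mul_of_nonneg_left h1 hl
  have hpt : ∀ᵐ ω ∂μ, Real.exp (l * (a * X ω)) ≤
      1 + (l*a) * X ω + (a^2 * φ) * X ω^2 := by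
    filter_upwards [hbd] with ω h
    exact expC hl ha0 ha1 hc h
  have hintR : Integrable (fun ω => 1 + (l*a) * X ω + (a^2 * φ) * X ω^2) μ :=
    ((integrable_const 1).add (hint1.const_mul _)).add (hint2.const_mul _)
  calc ∫ ω, Real.exp (l * (a * X ω)) ∂μ
      ≤ ∫ ω, (1 + (l*a) * X ω + (a^2 * φ) * X ω^2) ∂μ :=
        integral_mono_ae hintE hintR hpt
    _ = 1 + (l*a) * (∫ ω, X ω ∂μ) + (a^2 * φ) * ∫ ω, X ω^2 ∂μ := by
        have hI1 : Integrable (fun ω => 1 + (l*a) * X ω) μ := by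
          exact (integrable_const 1).add (hint1.const_mul _)
        rw [integral_add hI1 (hint2.const_mul _),
          integral_add (integrable_const 1) (hint1.const_mul _),
          integral_const, integral_const_mul, integral_const_mul]
        simp
    _ = 1 + a^2 * variance X μ * φ := by rw [hmean, hvar]; ring
    _ ≤ Real.exp (a^2 * variance X μ * φ) := by
        linarith [Real.add_one_le_exp (a^2 * variance X μ * φ)]

lemma prodE {Ω : Type*} [MeasurableSpace Ω] (μ : Measure Ω) [IsProbabilityMeasure μ]
    {N : ℕ} (Z : Fin N → Ω → ℝ) (hmeas : ∀ i, Measurable (Z i)) (hNA : NegAssoc μ Z)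
    {c : ℝ} (hc : 0 < c) (hbd : ∀ i, ∀ᵐ ω ∂μ, |Z i ω| ≤ c)
    (a : Fin N → ℝ) (ha : ∀ i, 0 ≤ a i ∧ a i ≤ 1) {l : ℝ} (hl : 0 ≤ l)
    (A : Finset (Fin N)) :
    ∫ ω, Real.exp (l * ∑ i ∈ A, a i * Z i ω) ∂μ ≤
      ∏ i ∈ A, ∫ ω, Real.exp (l * (a i * Z i ω)) ∂μ := by
  have hbd' : ∀ᵐ ω ∂μ, ∀ i, Z i ω ≤ c := by
    rw [MeasureTheory.ae_all_iff]
    intro i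
    filter_upwards [hbd i] with ω h using (abs_le.1 h).2
  induction A using Finset.induction_on with
  | empty => simp
  | insert i A hiA ih =>
    set f : ({x // x ∈ ({i} : Finset (Fin N))} → ℝ) → ℝ :=
      fun y => Real.exp (l * (a i * min (y ⟨i, Finset.mem_singleton_self i⟩) c)) with hf_def
    set g : ({x // x ∈ A} → ℝ) → ℝ :=
      fun y => Real.exp (l * ∑ j : {x // x ∈ A}, a j.1 * min (y j) c) with hg_def
    have hfm : Measurable f := by
      rw [hf_def]
      apply Measurable.exp
      have h1 : Measurable fun y : {x // x ∈ ({i} : Finset (Fin N))} → ℝ =>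
          y ⟨i, Finset.mem_singleton_self i⟩ := measurable_pi_apply _
      exact ((h1.min measurable_const).const_mul (a i)).const_mul l
    have hgm : Measurable g := by
      rw [hg_def]
      apply Measurable.exp
      apply Measurable.const_mul
      apply Finset.measurable_sum
      intro j _
      have h1 : Measurable fun y : {x // x ∈ A} → ℝ => y j := measurable_pi_apply _
      exact (h1.min measurable_const).const_mul (a j.1)
    have hfb : ∃ C, ∀ y, |f y| ≤ C := by
      refine ⟨Real.exp (l * (a i * c)), fun y => ?_⟩
      rw [abs_of_pos (Real.exp_pos _)]
      apply Real.exp_le_exp.2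
      exact mul_le_mul_of_nonneg_left
        (mul_le_mul_of_nonneg_left (min_le_right _ _) (ha i).1) hl
    have hgb : ∃ C, ∀ y, |g y| ≤ C := by
      refine ⟨Real.exp (l * ∑ j : {x // x ∈ A}, a j.1 * c), fun y => ?_⟩
      rw [abs_of_pos (Real.exp_pos _)]
      apply Real.exp_le_exp.2
      refine mul_le_mul_of_nonneg_left (Finset.sum_le_sum fun j _ => ?_) hl
      exact mul_le_mul_of_nonneg_left (min_le_right _ _) (ha j.1).1
    have hfmono : Monotone f := by
      intro y y' hy
      apply Real.exp_le_exp.2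
      exact mul_le_mul_of_nonneg_left
        (mul_le_mul_of_nonneg_left (min_le_min (hy _) le_rfl) (ha i).1) hl
    have hgmono : Monotone g := by
      intro y y' hy
      apply Real.exp_le_exp.2
      refine mul_le_mul_of_nonneg_left (Finset.sum_le_sum fun j _ => ?_) hl
      exact mul_le_mul_of_nonneg_left (min_le_min (hy j) le_rfl) (ha j.1).1
    have key := hNA {i} A (Finset.disjoint_singleton_left.2 hiA) f g hfm hgm hfb hgb
      hfmono hgmono
    have e2 : ∫ ω, f (fun k => Z k.1 ω) ∂μ = ∫ ω, Real.exp (l * (a i * Z i ω)) ∂μ := by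
      apply integral_congr_ae
      filter_upwards [hbd'] with ω h
      simp only [hf_def]
      rw [min_eq_left (h i)]
    have e3 : ∫ ω, g (fun j => Z j.1 ω) ∂μ =
        ∫ ω, Real.exp (l * ∑ j ∈ A, a j * Z j ω) ∂μ := by
      apply integral_congr_ae
      filter_upwards [hbd'] with ω h
      simp only [hg_def]
      congr 1
      congr 1
      rw [← Finset.sum_coe_sort A (fun j => a j * Z j ω)]
      exact Finset.sum_congr rfl fun j _ => by rw [min_eq_left (h j.1)]
    have e1 : ∫ ω, Real.exp (l * ∑ j ∈ insert i A, a j * Z j ω) ∂μ =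
        ∫ ω, f (fun k => Z k.1 ω) * g (fun j => Z j.1 ω) ∂μ := by
      apply integral_congr_ae
      filter_upwards [hbd'] with ω h
      simp only [hf_def, hg_def]
      rw [← Real.exp_add, Finset.sum_insert hiA, min_eq_left (h i)]
      congr 1
      rw [← Finset.sum_coe_sort A (fun j => a j * Z j ω), mul_add]
      congr 1
      congr 1
      exact Finset.sum_congr rfl fun j _ => by rw [min_eq_left (h j.1)]
    rw [e1, Finset.prod_insert hiA]
    calc ∫ ω, f (fun k => Z k.1 ω) * g (fun j => Z j.1 ω) ∂μ
        ≤ (∫ ω, f (fun k => Z k.1 ω) ∂μ) * ∫ ω, g (fun j => Z j.1 ω) ∂μ := key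
      _ = (∫ ω, Real.exp (l * (a i * Z i ω)) ∂μ) *
            ∫ ω, Real.exp (l * ∑ j ∈ A, a j * Z j ω) ∂μ := by rw [e2, e3]
      _ ≤ (∫ ω, Real.exp (l * (a i * Z i ω)) ∂μ) *
            ∏ j ∈ A, ∫ ω, Real.exp (l * (a j * Z j ω)) ∂μ := by
          exact mul_le_mul_of_nonneg_left ih
            (integral_nonneg fun ω => (Real.exp_pos _).le)

lemma numeric {v c t l : ℝ} (hv : 0 ≤ v) (hc : 0 < c) (ht : 0 < t)
    (hl : l = t / (v + c*t/3)) :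
    -(l*t) + v * ((Real.exp (l*c) - 1 - l*c)/c^2) ≤ -t^2/(2*v + (2/3)*c*t) := by
  have hD : 0 < v + c*t/3 := by nlinarith
  have hDne : v + c*t/3 ≠ 0 := hD.ne'
  have hden : 2*v + (2/3)*c*t = 2*(v + c*t/3) := by ring
  rcases eq_or_lt_of_le hv with hv0 | hvpos
  · -- v = 0
    rw [← hv0] at hl ⊢
    have hl3 : l = 3/c := by rw [hl]; field_simp; ring
    have h1 : -(l*t) + 0 * ((Real.exp (l*c) - 1 - l*c)/c^2) = -(3*t/c) := by
      rw [hl3]; field_simp; ring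
    have e : -t^2/(2*0 + 2/3*c*t) = -(3*t/(2*c)) := by field_simp; ring
    have key : 3*t/(2*c) ≤ 3*t/c :=
      div_le_div_of_nonneg_left (by positivity) hc (by linarith)
    rw [h1, e]
    linarith
  · -- v > 0
    have hclaim : 1 - l*c/3 = v/(v + c*t/3) := by
      rw [hl]; field_simp; ring
    have hlpos : 0 < l := by rw [hl]; positivity
    have hu0 : 0 ≤ l*c := by positivity
    have hu3 : l*c < 3 := by
      rw [hl, div_mul_eq_mul_div, div_lt_iff₀ hD]
      nlinarith
    have hB := expB hu0 hu3
    rw [hclaim] at hB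
    have h2 : v * ((l*c)^2 / (2*(v/(v + c*t/3))) / c^2) = t^2/(2*(v + c*t/3)) := by
      rw [hl]; field_simp
    have h3 : v * ((Real.exp (l*c) - 1 - l*c)/c^2) ≤ t^2/(2*(v + c*t/3)) := by
      rw [← h2]
      apply mul_le_mul_of_nonneg_left _ hv
      exact div_le_div_of_nonneg_right hB (by positivity)
    have h4 : l*t = t^2/(v + c*t/3) := by rw [hl]; field_simp
    have h5 : t^2/(v + c*t/3) = t^2/(2*(v + c*t/3)) + t^2/(2*(v + c*t/3)) := by
      field_simp; ring
    rw [hden, neg_div]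
    linarith


/-- Bernstein inequality for sums of bounded, centered, negatively associated random
variables. -/
theorem negAssoc_bernstein
    {Ω : Type*} [MeasurableSpace Ω] (μ : Measure Ω) [IsProbabilityMeasure μ]
    {N : ℕ} (hN : 1 ≤ N) (Z : Fin N → Ω → ℝ) (hmeas : ∀ i, Measurable (Z i))
    (hL2 : ∀ i, MemLp (Z i) 2 μ)
    (hNA : NegAssoc μ Z)
    (c : ℝ) (hc : 0 < c) (hbd : ∀ i, ∀ᵐ ω ∂μ, |Z i ω| ≤ c)
    (hmean : ∀ i, ∫ ω, Z i ω ∂μ = 0)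
    (a : Fin N → ℝ) (ha : ∀ i, 0 ≤ a i ∧ a i ≤ 1)
    (σ2 : ℝ) (hσ2 : σ2 = (1 / (N : ℝ)) * ∑ i, a i ^ 2 * variance (Z i) μ)
    (t : ℝ) (ht : 0 < t) :
    μ {ω | ∑ i, a i * Z i ω ≥ t}
      ≤ ENNReal.ofReal
          (Real.exp (-t ^ 2 / (2 * (N : ℝ) * σ2 + (2 / 3) * c * t))) := by
  have hNpos : (0:ℝ) < N := by
    have : 0 < N := hN
    exact_mod_cast this
  set v : ℝ := ∑ i, a i ^ 2 * variance (Z i) μ with hv_def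
  have hv0 : 0 ≤ v :=
    Finset.sum_nonneg fun i _ => mul_nonneg (sq_nonneg _) (variance_nonneg _ _)
  have h2N : 2 * (N:ℝ) * σ2 + (2/3)*c*t = 2*v + (2/3)*c*t := by
    rw [hσ2]; field_simp
  have hD : 0 < v + c*t/3 := by nlinarith
  set l : ℝ := t / (v + c*t/3) with hl_def
  have hl0 : 0 < l := div_pos ht hD
  have hSm : Measurable fun ω => ∑ i, a i * Z i ω :=
    Finset.measurable_sum _ fun i _ => (hmeas i).const_mul (a i)
  have hbd' : ∀ᵐ ω ∂μ, ∀ i, |Z i ω| ≤ c := (MeasureTheory.ae_all_iff).2 hbd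
  have hintS : Integrable (fun ω => Real.exp (l * ∑ i, a i * Z i ω)) μ := by
    refine Integrable.mono' (integrable_const (Real.exp (l * ((N:ℝ)*c))))
      ((hSm.const_mul l).exp.aestronglyMeasurable) ?_
    filter_upwards [hbd'] with ω h
    rw [Real.norm_eq_abs, abs_of_pos (Real.exp_pos _)]
    apply Real.exp_le_exp.2
    apply mul_le_mul_of_nonneg_left _ hl0.le
    calc (∑ i, a i * Z i ω) ≤ ∑ _i : Fin N, c := by
          refine Finset.sum_le_sum fun i _ => ?_
          calc a i * Z i ω ≤ a i * |Z i ω| :=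
                mul_le_mul_of_nonneg_left (le_abs_self _) (ha i).1
          _ ≤ 1 * |Z i ω| := mul_le_mul_of_nonneg_right (ha i).2 (abs_nonneg _)
          _ ≤ c := by rw [one_mul]; exact h i
      _ = (N:ℝ)*c := by simp [Finset.card_univ, nsmul_eq_mul]
  have hch := measure_ge_le_exp_mul_mgf (μ := μ)
    (X := fun ω => ∑ i, a i * Z i ω) (t := l) t hl0.le hintS
  have hprod := prodE μ Z hmeas hNA hc hbd a ha hl0.le Finset.univ
  have heach : ∀ i, ∫ ω, Real.exp (l * (a i * Z i ω)) ∂μ ≤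
      Real.exp (a i^2 * variance (Z i) μ * ((Real.exp (l*c) - 1 - l*c)/c^2)) :=
    fun i => mgfD μ (Z i) (hmeas i) (hL2 i) hc (hbd i) (hmean i) (ha i).1 (ha i).2 hl0.le
  have hmgf : mgf (fun ω => ∑ i, a i * Z i ω) μ l ≤
      Real.exp (v * ((Real.exp (l*c) - 1 - l*c)/c^2)) := by
    rw [mgf]
    calc (∫ ω, Real.exp (l * ∑ i, a i * Z i ω) ∂μ)
        ≤ ∏ i, ∫ ω, Real.exp (l * (a i * Z i ω)) ∂μ := hprod
      _ ≤ ∏ i, Real.exp (a i^2 * variance (Z i) μ * ((Real.exp (l*c) - 1 - l*c)/c^2)) :=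
          Finset.prod_le_prod (fun i _ => integral_nonneg fun ω => (Real.exp_pos _).le)
            (fun i _ => heach i)
      _ = Real.exp (∑ i, a i^2 * variance (Z i) μ * ((Real.exp (l*c) - 1 - l*c)/c^2)) :=
          (Real.exp_sum _ _).symm
      _ = Real.exp (v * ((Real.exp (l*c) - 1 - l*c)/c^2)) := by
          rw [← Finset.sum_mul]
  have hfinal : Real.exp (-l*t) * mgf (fun ω => ∑ i, a i * Z i ω) μ l ≤
      Real.exp (-t^2/(2*v + (2/3)*c*t)) := by
    calc Real.exp (-l*t) * mgf (fun ω => ∑ i, a i * Z i ω) μ l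
        ≤ Real.exp (-l*t) * Real.exp (v * ((Real.exp (l*c) - 1 - l*c)/c^2)) :=
          mul_le_mul_of_nonneg_left hmgf (Real.exp_pos _).le
      _ = Real.exp (-(l*t) + v * ((Real.exp (l*c) - 1 - l*c)/c^2)) := by
          rw [← Real.exp_add, neg_mul]
      _ ≤ Real.exp (-t^2/(2*v + (2/3)*c*t)) :=
          Real.exp_le_exp.2 (numeric hv0 hc ht hl_def)
  rw [h2N]
  refine (ENNReal.le_ofReal_iff_toReal_le (measure_ne_top μ _) (Real.exp_nonneg _)).2 ?_
  exact le_trans (le_of_eq (by rfl)) (hch.trans hfinal)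
end

section
/- Let ε*_N = (ε*_1,…,ε*_N) be a rejective sampling scheme of size n on {1,…,N} with canonical parameter p = (p_1,…,p_N) ∈ (0,1)^N, Σ_{i=1}^N p_i = n. Then the binary random variables ε*_1,…,ε*_N are negatively associated: for every pair of disjoint subsets A_1, A_2 of {1,…,N} and every pair of real-valued bounded measurable functions f and g, defined on {0,1}^{#A_1} and {0,1}^{#A_2} respectively and nondecreasing in each coordinate, Cov( f((ε*_i)_{i∈A_1}), g((ε*_j)_{j∈A_2}) ) ≤ 0. -/
open MeasureTheory ProbabilityTheory Real Finset

/-- The (unnormalized) weight of a sample `s` under Poisson weights `p`. -/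
noncomputable def rejWeight {N : ℕ} (p : Fin N → ℝ) (s : Finset (Fin N)) : ℝ :=
  (∏ i ∈ s, p i) * ∏ i ∈ sᶜ, (1 - p i)

/-- `ε` is a rejective (conditional Poisson) sampling scheme of size `n` with
canonical parameter `p`: it is a `{0,1}`-valued random vector whose law puts, on each
subset `s` of cardinality `n`, probability proportional to
`∏_{i∈s} p i * ∏_{i∉s} (1 - p i)`, and zero probability elsewhere. -/
def IsRejective {Ω : Type*} [MeasurableSpace Ω] (μ : Measure Ω) {N : ℕ} (n : ℕ)
    (p : Fin N → ℝ) (ε : Ω → Fin N → ℝ) : Prop :=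
  (∀ ω i, ε ω i = 0 ∨ ε ω i = 1) ∧
  (∀ i, Measurable fun ω => ε ω i) ∧
  ∀ s : Finset (Fin N),
    μ {ω | ∀ i, ε ω i = if i ∈ s then 1 else 0} =
      if s.card = n then
        ENNReal.ofReal
          (rejWeight p s /
            ∑ u ∈ Finset.univ.filter (fun u : Finset (Fin N) => u.card = n), rejWeight p u)
      else 0


section NAcomb

set_option linter.unusedSectionVars false
variable {ι : Type*} [DecidableEq ι]

noncomputable def wP (w : ι → ℝ) (s : Finset ι) : ℝ := ∏ i ∈ s, w i

noncomputable def ES (w : ι → ℝ) (k : ℕ) (E : Finset ι) (F : Finset ι → ℝ) : ℝ :=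
  ∑ s ∈ E.powersetCard k, wP w s * F s

noncomputable def ZS (w : ι → ℝ) (k : ℕ) (E : Finset ι) : ℝ := ES w k E (fun _ => 1)

lemma ZS_def (w : ι → ℝ) (k : ℕ) (E : Finset ι) : ZS w k E = ∑ s ∈ E.powersetCard k, wP w s := by
  simp [ZS, ES]

lemma ES_zero (w : ι → ℝ) (E : Finset ι) (F : Finset ι → ℝ) : ES w 0 E F = F ∅ := by
  simp [ES, wP]

lemma ES_of_lt (w : ι → ℝ) {k : ℕ} {E : Finset ι} (F : Finset ι → ℝ) (h : E.card < k) :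
    ES w k E F = 0 := by
  simp [ES, Finset.powersetCard_eq_empty.2 h]

lemma ES_insert (w : ι → ℝ) (k : ℕ) {E : Finset ι} {i : ι} (hi : i ∉ E) (F : Finset ι → ℝ) :
    ES w (k+1) (insert i E) F
      = ES w (k+1) E F + w i * ES w k E (fun t => F (insert i t)) := by
  rw [ES, Finset.powersetCard_succ_insert hi, Finset.sum_union, Finset.sum_image]
  · congr 1
    rw [ES, Finset.mul_sum]
    refine Finset.sum_congr rfl fun t ht => ?_
    have hit : i ∉ t := fun hmem => hi ((Finset.mem_powersetCard.1 ht).1 hmem)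
    show wP w (insert i t) * F (insert i t) = w i * (wP w t * F (insert i t))
    rw [wP, wP, Finset.prod_insert hit]
    ring
  · intro a ha b hb hab
    have hia : i ∉ a := fun hmem => hi ((Finset.mem_powersetCard.1 ha).1 hmem)
    have hib : i ∉ b := fun hmem => hi ((Finset.mem_powersetCard.1 hb).1 hmem)
    have := congrArg (fun (s : Finset ι) => s.erase i) hab
    simpa [Finset.erase_insert hia, Finset.erase_insert hib] using this
  · rw [Finset.disjoint_left]
    intro a ha hb
    rcases Finset.mem_image.1 hb with ⟨t, ht, rfl⟩
    exact hi ((Finset.mem_powersetCard.1 ha).1 (Finset.mem_insert_self i t))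

lemma ZS_insert (w : ι → ℝ) (k : ℕ) {E : Finset ι} {i : ι} (hi : i ∉ E) :
    ZS w (k+1) (insert i E) = ZS w (k+1) E + w i * ZS w k E := ES_insert w k hi _

lemma ZS_nonneg {w : ι → ℝ} {E : Finset ι} (hw : ∀ i ∈ E, 0 < w i) (k : ℕ) :
    0 ≤ ZS w k E := by
  rw [ZS_def]
  refine Finset.sum_nonneg fun s hs => ?_
  have hsE := (Finset.mem_powersetCard.1 hs).1
  exact le_of_lt (Finset.prod_pos fun i hi => hw i (hsE hi))

lemma ZS_pos {w : ι → ℝ} {E : Finset ι} (hw : ∀ i ∈ E, 0 < w i) {k : ℕ} (hk : k ≤ E.card) :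
    0 < ZS w k E := by
  rw [ZS_def]
  obtain ⟨t, htE, htc⟩ := Finset.exists_subset_card_eq hk
  refine Finset.sum_pos (fun s hs => ?_) ⟨t, Finset.mem_powersetCard.2 ⟨htE, htc⟩⟩
  have hsE := (Finset.mem_powersetCard.1 hs).1
  exact Finset.prod_pos fun i hi => hw i (hsE hi)

lemma ZS_zero_succ {w : ι → ℝ} {E : Finset ι} (hw : ∀ i ∈ E, 0 < w i) {k : ℕ}
    (h : ZS w k E = 0) : ZS w (k+1) E = 0 := by
  by_contra h1
  have hk1 : k + 1 ≤ E.card := by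
    by_contra hc
    exact h1 (by simpa [ZS_def] using (by simp [Finset.powersetCard_eq_empty.2 (Nat.lt_of_not_le hc), ZS_def] : ZS w (k+1) E = 0))
  exact absurd h (ne_of_gt (ZS_pos hw (Nat.le_of_succ_le hk1)))

lemma ZS_zero (w : ι → ℝ) (E : Finset ι) : ZS w 0 E = 1 := by simp [ZS, ES, wP]

lemma newton_chain {w : ι → ℝ} {E : Finset ι} (hw : ∀ i ∈ E, 0 < w i)
    (IH : ∀ k, ZS w k E * ZS w (k+2) E ≤ ZS w (k+1) E ^ 2) (k : ℕ) :
    ZS w k E * ZS w (k+3) E ≤ ZS w (k+1) E * ZS w (k+2) E := by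
  by_cases h2 : ZS w (k+2) E = 0
  · have h3 : ZS w (k+3) E = 0 := ZS_zero_succ hw h2
    rw [h3, mul_zero]
    exact mul_nonneg (ZS_nonneg hw _) (ZS_nonneg hw _)
  · have h2p : 0 < ZS w (k+2) E := lt_of_le_of_ne (ZS_nonneg hw _) (Ne.symm h2)
    have h1 : ZS w (k+1) E ≠ 0 := fun h => h2 (ZS_zero_succ hw h)
    have h1p : 0 < ZS w (k+1) E := lt_of_le_of_ne (ZS_nonneg hw _) (Ne.symm h1)
    have hm := mul_le_mul (IH k) (IH (k+1))
      (mul_nonneg (ZS_nonneg hw _) (ZS_nonneg hw _)) (sq_nonneg _)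
    nlinarith [mul_nonneg (ZS_nonneg hw k) (ZS_nonneg hw (k+3)), mul_pos h1p h2p]

lemma newton (w : ι → ℝ) (E : Finset ι) : (∀ i ∈ E, 0 < w i) →
    ∀ k, ZS w k E * ZS w (k+2) E ≤ ZS w (k+1) E ^ 2 := by
  induction E using Finset.induction_on with
  | empty =>
    intro _ k
    have : ZS w (k+2) ∅ = 0 := by
      rw [ZS_def]; simp [Finset.powersetCard_eq_empty.2 (by simp : (∅ : Finset ι).card < k+2)]
    rw [this, mul_zero]
    exact sq_nonneg _
  | @insert i E' hi IH =>
    intro hw k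
    have hw' : ∀ j ∈ E', 0 < w j := fun j hj => hw j (Finset.mem_insert_of_mem hj)
    have hwi : 0 < w i := hw i (Finset.mem_insert_self _ _)
    have IH' := IH hw'
    cases k with
    | zero =>
      rw [ZS_insert w 1 hi, ZS_insert w 0 hi, ZS_zero, ZS_zero]
      have h0 := IH' 0
      rw [ZS_zero, one_mul] at h0
      nlinarith [ZS_nonneg hw' 1, hwi]
    | succ k' =>
      have d1 : ZS w (k'+1) (insert i E') = ZS w (k'+1) E' + w i * ZS w k' E' := ZS_insert w k' hi
      have d2 : ZS w (k'+2) (insert i E') = ZS w (k'+2) E' + w i * ZS w (k'+1) E' := ZS_insert w (k'+1) hi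
      have d3 : ZS w (k'+3) (insert i E') = ZS w (k'+3) E' + w i * ZS w (k'+2) E' := ZS_insert w (k'+2) hi
      rw [show k'+1+2 = k'+3 by ring, show k'+1+1 = k'+2 by ring, d1, d2, d3]
      nlinarith [IH' (k'+1),
        mul_le_mul_of_nonneg_left (newton_chain hw' IH' k') hwi.le,
        mul_le_mul_of_nonneg_left (IH' k') (mul_nonneg hwi.le hwi.le)]

lemma split_id {A B Y0 Y1 wi : ℝ} (h0 : Y0 ≠ 0) (h1 : Y1 ≠ 0) (hZ : Y1 + wi*Y0 ≠ 0) :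
    (B + wi*A)/(Y1 + wi*Y0)
      = (wi*Y0/(Y1+wi*Y0))*(A/Y0) + (1 - wi*Y0/(Y1+wi*Y0))*(B/Y1) := by
  field_simp
  ring

lemma pi_mono {Y0 Y1 Y2 wi : ℝ} (hw : 0 < wi) (h0 : 0 < Y0) (h1 : 0 < Y1) (h2 : 0 < Y2)
    (hnew : Y0*Y2 ≤ Y1^2) : wi*Y0/(Y1+wi*Y0) ≤ wi*Y1/(Y2+wi*Y1) := by
  rw [div_le_div_iff₀ (by positivity) (by positivity)]
  nlinarith

lemma efron_core {a a' b b' q q' : ℝ} (h1 : a ≤ a') (h2 : b ≤ b') (h3 : b ≤ a')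
    (hq0 : 0 ≤ q) (hq1 : q ≤ 1) (hq'0 : 0 ≤ q') (hq'1 : q' ≤ 1) (h5 : q ≤ q') :
    q*a + (1-q)*b ≤ q'*a' + (1-q')*b' := by
  rcases le_total b a with hba | hab
  · nlinarith [mul_nonneg (sub_nonneg.2 h5) (sub_nonneg.2 hba),
      mul_nonneg hq'0 (sub_nonneg.2 h1), mul_nonneg (sub_nonneg.2 hq'1) (sub_nonneg.2 h2)]
  · nlinarith [mul_nonneg hq0 (sub_nonneg.2 hab),
      mul_nonneg hq'0 (sub_nonneg.2 h3), mul_nonneg (sub_nonneg.2 hq'1) (sub_nonneg.2 h2)]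

lemma ES_mono_fun {w : ι → ℝ} {E : Finset ι} (hw : ∀ i ∈ E, 0 < w i)
    {F G : Finset ι → ℝ} (h : ∀ s, s ⊆ E → F s ≤ G s) (k : ℕ) :
    ES w k E F ≤ ES w k E G := by
  refine Finset.sum_le_sum fun s hs => ?_
  have hsE := (Finset.mem_powersetCard.1 hs).1
  have hwp : 0 ≤ wP w s := le_of_lt (Finset.prod_pos fun j hj => hw j (hsE hj))
  exact mul_le_mul_of_nonneg_left (h s hsE) hwp

lemma efron (w : ι → ℝ) (E : Finset ι) : (∀ i ∈ E, 0 < w i) →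
    ∀ F : Finset ι → ℝ, (∀ s t : Finset ι, s ⊆ t → t ⊆ E → F s ≤ F t) →
    ∀ k, ES w k E F * ZS w (k+1) E ≤ ES w (k+1) E F * ZS w k E := by
  induction E using Finset.induction_on with
  | empty =>
    intro _ F _ k
    have h1 : ZS w (k+1) (∅ : Finset ι) = 0 := by
      rw [ZS_def]; simp [Finset.powersetCard_eq_empty.2 (by simp : (∅ : Finset ι).card < k+1)]
    have h2 : ES w (k+1) (∅ : Finset ι) F = 0 := ES_of_lt w F (by simp)
    rw [h1, h2, mul_zero, zero_mul]
  | @insert i E' hi IH =>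
    intro hw F hF k
    have hw' : ∀ j ∈ E', 0 < w j := fun j hj => hw j (Finset.mem_insert_of_mem hj)
    have hwi : 0 < w i := hw i (Finset.mem_insert_self _ _)
    have hF'mono : ∀ s t : Finset ι, s ⊆ t → t ⊆ E' →
        F (insert i s) ≤ F (insert i t) := fun s t hst htE =>
      hF _ _ (Finset.insert_subset_insert i hst) (Finset.insert_subset_insert i htE)
    have hFmono' : ∀ s t : Finset ι, s ⊆ t → t ⊆ E' → F s ≤ F t := fun s t hst htE =>
      hF s t hst (htE.trans (Finset.subset_insert i E'))
    have IHF := IH hw' F hFmono'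
    have IHF' := IH hw' (fun t => F (insert i t)) hF'mono
    cases k with
    | zero =>
      rw [ES_zero, ZS_zero, ES_insert w 0 hi, ZS_insert w 0 hi, ES_zero, ZS_zero]
      simp only [zero_add]
      have hB1 : F ∅ * ZS w 1 E' ≤ ES w 1 E' F := by
        rw [ZS_def, ES, Finset.mul_sum]
        refine Finset.sum_le_sum fun t ht => ?_
        have htE := (Finset.mem_powersetCard.1 ht).1
        have h1 : F ∅ ≤ F t := hFmono' ∅ t (Finset.empty_subset t) htE
        have hwp : 0 ≤ wP w t := le_of_lt (Finset.prod_pos fun j hj => hw' j (htE hj))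
        rw [mul_comm]
        exact mul_le_mul_of_nonneg_left h1 hwp
      have hFi : F ∅ ≤ F (insert i ∅) :=
        hF ∅ (insert i ∅) (Finset.empty_subset _)
          (Finset.insert_subset_insert i (Finset.empty_subset E'))
      nlinarith [hwi]
    | succ k' =>
      set A := ES w k' E' (fun t => F (insert i t)) with hA
      set A' := ES w (k'+1) E' (fun t => F (insert i t)) with hA'
      set B := ES w (k'+1) E' F with hB
      set B' := ES w (k'+2) E' F with hB'
      set Y0 := ZS w k' E' with hY0
      set Y1 := ZS w (k'+1) E' with hY1
      set Y2 := ZS w (k'+2) E' with hY2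
      have dES1 : ES w (k'+1) (insert i E') F = B + w i * A := ES_insert w k' hi F
      have dES2 : ES w (k'+2) (insert i E') F = B' + w i * A' := ES_insert w (k'+1) hi F
      have dZ1 : ZS w (k'+1) (insert i E') = Y1 + w i * Y0 := ZS_insert w k' hi
      have dZ2 : ZS w (k'+2) (insert i E') = Y2 + w i * Y1 := ZS_insert w (k'+1) hi
      rw [show k'+1+1 = k'+2 by ring, dES1, dES2, dZ1, dZ2]
      have hBA' : B ≤ A' :=
        ES_mono_fun hw' (fun s hs =>
          hF s (insert i s) (Finset.subset_insert i s) (Finset.insert_subset_insert i hs)) (k'+1)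
      have hIH1 : A * Y1 ≤ A' * Y0 := IHF' k'
      have hIH2 : B * Y2 ≤ B' * Y1 := IHF (k'+1)
      have hnew : Y0 * Y2 ≤ Y1 ^ 2 := newton w E' hw' k'
      have hY0n : 0 ≤ Y0 := ZS_nonneg hw' k'
      have hY1n : 0 ≤ Y1 := ZS_nonneg hw' (k'+1)
      have hY2n : 0 ≤ Y2 := ZS_nonneg hw' (k'+2)
      rcases lt_or_ge E'.card (k'+1) with hc | hc
      · -- degenerate: Y1 = Y2 = 0, B = B' = A' = 0
        have e1 : Y1 = 0 := by rw [hY1, ZS_def]; simp [Finset.powersetCard_eq_empty.2 hc]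
        have e2 : Y2 = 0 := by
          rw [hY2, ZS_def]; simp [Finset.powersetCard_eq_empty.2 (hc.trans (Nat.lt_succ_self _))]
        have e3 : B = 0 := ES_of_lt w F hc
        have e4 : B' = 0 := ES_of_lt w F (hc.trans (Nat.lt_succ_self _))
        have e5 : A' = 0 := ES_of_lt w _ hc
        rw [e1, e2, e3, e4, e5]
        ring_nf
        simp
      rcases eq_or_lt_of_le hc with hc1 | hc2
      · -- boundary: k'+1 = card E', Y2 = 0, B' = 0
        have e2 : Y2 = 0 := by
          rw [hY2, ZS_def]
          simp [Finset.powersetCard_eq_empty.2 (by omega : E'.card < k'+2)]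
        have e4 : B' = 0 := ES_of_lt w F (by omega)
        rw [e2, e4]
        nlinarith [hwi, ZS_pos hw' (le_of_eq hc1), mul_le_mul_of_nonneg_left hIH1 hwi.le,
          mul_le_mul_of_nonneg_left (mul_le_mul_of_nonneg_right hBA' hY1n) hwi.le]
      · -- main case: k'+2 ≤ card E'
        have hY0p : 0 < Y0 := ZS_pos hw' (by omega)
        have hY1p : 0 < Y1 := ZS_pos hw' (by omega)
        have hY2p : 0 < Y2 := ZS_pos hw' hc2
        have hZ1p : 0 < Y1 + w i * Y0 := by positivity
        have hZ2p : 0 < Y2 + w i * Y1 := by positivity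
        rw [← div_le_div_iff₀ hZ1p hZ2p]
        have e1 := split_id (A := A) (B := B) hY0p.ne' hY1p.ne' hZ1p.ne'
        have e2 := split_id (A := A') (B := B') hY1p.ne' hY2p.ne' hZ2p.ne'
        rw [e1, e2]
        refine efron_core ?_ ?_ ?_ ?_ ?_ ?_ ?_ ?_
        · rw [div_le_div_iff₀ hY0p hY1p]; exact hIH1
        · rw [div_le_div_iff₀ hY1p hY2p]; exact hIH2
        · gcongr
        · positivity
        · rw [div_le_one hZ1p]; linarith [mul_nonneg hwi.le hY0n]
        · positivity
        · rw [div_le_one hZ2p]; linarith [mul_nonneg hwi.le hY1n]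
        · exact pi_mono hwi hY0p hY1p hY2p hnew

lemma inner_bij (w : ι → ℝ) {E : Finset ι} {i : ι} (hi : i ∈ E) (n : ℕ) (H : Finset ι → ℝ) :
    w i * ES w n (E.erase i) (fun t => H (insert i t))
      = ∑ s ∈ (E.powersetCard (n+1)).filter (fun s => i ∈ s), wP w s * H s := by
  rw [ES, Finset.mul_sum]
  refine Finset.sum_bij' (fun t _ => insert i t) (fun s _ => s.erase i) ?_ ?_ ?_ ?_ ?_
  · intro t ht
    obtain ⟨htE, htc⟩ := Finset.mem_powersetCard.1 ht
    have hit : i ∉ t := fun h => (Finset.mem_erase.1 (htE h)).1 rfl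
    refine Finset.mem_filter.2 ⟨Finset.mem_powersetCard.2 ⟨?_, ?_⟩, Finset.mem_insert_self _ _⟩
    · exact Finset.insert_subset hi (htE.trans (Finset.erase_subset _ _))
    · rw [Finset.card_insert_of_notMem hit, htc]
  · intro s hs
    obtain ⟨hs1, hs2⟩ := Finset.mem_filter.1 hs
    obtain ⟨hsE, hsc⟩ := Finset.mem_powersetCard.1 hs1
    refine Finset.mem_powersetCard.2 ⟨Finset.erase_subset_erase i hsE, ?_⟩
    rw [Finset.card_erase_of_mem hs2, hsc]
    omega
  · intro t ht
    exact Finset.erase_insert (fun h => (Finset.mem_erase.1 ((Finset.mem_powersetCard.1 ht).1 h)).1 rfl)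
  · intro s hs
    exact Finset.insert_erase (Finset.mem_filter.1 hs).2
  · intro t ht
    have hit : i ∉ t := fun h => (Finset.mem_erase.1 ((Finset.mem_powersetCard.1 ht).1 h)).1 rfl
    show w i * (wP w t * H (insert i t)) = wP w (insert i t) * H (insert i t)
    rw [wP, wP, Finset.prod_insert hit]
    ring

lemma counting (w : ι → ℝ) (E : Finset ι) (n : ℕ) (H : Finset ι → ℝ) :
    ∑ i ∈ E, w i * ES w n (E.erase i) (fun t => H (insert i t))
      = (n+1 : ℝ) * ES w (n+1) E H := by
  have h1 : ∀ i ∈ E, w i * ES w n (E.erase i) (fun t => H (insert i t))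
      = ∑ s ∈ E.powersetCard (n+1), if i ∈ s then wP w s * H s else 0 := by
    intro i hi
    rw [inner_bij w hi n H, Finset.sum_filter]
  rw [Finset.sum_congr rfl h1, Finset.sum_comm]
  rw [ES, Finset.mul_sum]
  refine Finset.sum_congr rfl fun s hs => ?_
  obtain ⟨hsE, hsc⟩ := Finset.mem_powersetCard.1 hs
  rw [Finset.sum_ite_mem, Finset.inter_eq_right.2 hsE, Finset.sum_const, hsc]
  simp [nsmul_eq_mul]

lemma na_core {AF AG AFG BF BG BFG Y0 Y1 wi : ℝ} (hw : 0 < wi) (hY0 : 0 < Y0) (hY1 : 0 < Y1)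
    (q1 : AFG * Y0 ≤ AF * AG) (q2 : BFG * Y1 ≤ BF * BG)
    (hD : (AF * Y1 - BF * Y0) * (AG * Y1 - BG * Y0) ≤ 0) :
    (BFG + wi * AFG) * (Y1 + wi * Y0) ≤ (BF + wi * AF) * (BG + wi * AG) := by
  have key : (BFG + wi * AFG) * (Y1 + wi * Y0) * (Y0 * Y1)
      ≤ (BF + wi * AF) * (BG + wi * AG) * (Y0 * Y1) := by
    nlinarith [mul_le_mul_of_nonneg_right q2 (mul_pos hY0 hY1).le,
      mul_le_mul_of_nonneg_right q1 (show (0:ℝ) ≤ wi^2 * (Y0*Y1) by positivity),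
      mul_le_mul_of_nonneg_right q2 (show (0:ℝ) ≤ wi * Y0^2 by positivity),
      mul_le_mul_of_nonneg_right q1 (show (0:ℝ) ≤ wi * Y1^2 by positivity),
      mul_le_mul_of_nonneg_right hD hw.le]
  exact le_of_mul_le_mul_right key (by positivity)

lemma ZS_of_lt (w : ι → ℝ) {k : ℕ} {E : Finset ι} (h : E.card < k) : ZS w k E = 0 :=
  ES_of_lt w _ h

theorem NA_comb (w : ι → ℝ) : ∀ (m : ℕ) (E : Finset ι), E.card ≤ m → (∀ i ∈ E, 0 < w i) →
    ∀ (n : ℕ) (A B : Finset ι), A ⊆ E → B ⊆ E → Disjoint A B →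
    ∀ F G : Finset ι → ℝ,
    (∀ s, s ⊆ E → F s = F (s ∩ A)) → (∀ s, s ⊆ E → G s = G (s ∩ B)) →
    (∀ s t, s ⊆ t → t ⊆ E → F s ≤ F t) → (∀ s t, s ⊆ t → t ⊆ E → G s ≤ G t) →
    ES w n E (fun s => F s * G s) * ZS w n E ≤ ES w n E F * ES w n E G := by
  intro m
  induction m with
  | zero =>
    intro E hcard hw n A B hAE hBE hAB F G hFd hGd hF hG
    have hE : E = ∅ := Finset.card_eq_zero.1 (Nat.le_zero.1 hcard)
    subst hE
    rcases Nat.eq_zero_or_pos n with rfl | hn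
    · rw [ES_zero, ES_zero, ES_zero, ZS_zero]; ring_nf; exact le_refl _
    · rw [ES_of_lt w _ (by simpa using hn), ES_of_lt w _ (by simpa using hn),
        ZS_of_lt w (by simpa using hn)]
      simp
  | succ m IH =>
    intro E hcard hw n A B hAE hBE hAB F G hFd hGd hF hG
    rcases Nat.eq_zero_or_pos n with rfl | hn1
    · rw [ES_zero, ES_zero, ES_zero, ZS_zero]; ring_nf; exact le_refl _
    rcases lt_trichotomy E.card n with hlt | heq | hgt
    · rw [ES_of_lt w _ hlt, ES_of_lt w _ hlt, ZS_of_lt w hlt]; simp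
    · have hself : E.powersetCard n = {E} := by rw [← heq]; exact Finset.powersetCard_self E
      rw [ES, ES, ES, ZS_def, hself]
      simp only [Finset.sum_singleton]
      ring_nf
      exact le_refl _
    -- now 1 ≤ n < E.card
    by_cases hA0 : A = ∅
    · subst hA0
      have hFc : ∀ s, s ⊆ E → F s = F ∅ := fun s hs => by simpa using hFd s hs
      have e1 : ES w n E (fun s => F s * G s) = F ∅ * ES w n E G := by
        rw [ES, ES, Finset.mul_sum]
        refine Finset.sum_congr rfl fun s hs => ?_
        rw [hFc s (Finset.mem_powersetCard.1 hs).1]; ring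
      have e2 : ES w n E F = F ∅ * ZS w n E := by
        rw [ES, ZS_def, Finset.mul_sum]
        refine Finset.sum_congr rfl fun s hs => ?_
        rw [hFc s (Finset.mem_powersetCard.1 hs).1]; ring
      rw [e1, e2]; ring_nf; exact le_refl _
    by_cases hB0 : B = ∅
    · subst hB0
      have hGc : ∀ s, s ⊆ E → G s = G ∅ := fun s hs => by simpa using hGd s hs
      have e1 : ES w n E (fun s => F s * G s) = G ∅ * ES w n E F := by
        rw [ES, ES, Finset.mul_sum]
        refine Finset.sum_congr rfl fun s hs => ?_
        rw [hGc s (Finset.mem_powersetCard.1 hs).1]; ring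
      have e2 : ES w n E G = G ∅ * ZS w n E := by
        rw [ES, ZS_def, Finset.mul_sum]
        refine Finset.sum_congr rfl fun s hs => ?_
        rw [hGc s (Finset.mem_powersetCard.1 hs).1]; ring
      rw [e1, e2]; ring_nf; exact le_refl _
    -- main case
    obtain ⟨n', rfl⟩ : ∃ n', n = n' + 1 := ⟨n - 1, by omega⟩
    classical
    set DF : ι → ℝ := fun i =>
      ES w n' (E.erase i) (fun t => F (insert i t)) * ZS w (n'+1) (E.erase i)
        - ES w (n'+1) (E.erase i) F * ZS w n' (E.erase i) with hDFdef
    set DG : ι → ℝ := fun i =>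
      ES w n' (E.erase i) (fun t => G (insert i t)) * ZS w (n'+1) (E.erase i)
        - ES w (n'+1) (E.erase i) G * ZS w n' (E.erase i) with hDGdef
    have hdecES : ∀ (H : Finset ι → ℝ) i, i ∈ E → ES w (n'+1) E H
        = ES w (n'+1) (E.erase i) H + w i * ES w n' (E.erase i) (fun t => H (insert i t)) := by
      intro H i hi
      conv_lhs => rw [← Finset.insert_erase hi]
      exact ES_insert w n' (Finset.notMem_erase i E) H
    have hdecZ : ∀ i, i ∈ E → ZS w (n'+1) E
        = ZS w (n'+1) (E.erase i) + w i * ZS w n' (E.erase i) := by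
      intro i hi
      conv_lhs => rw [← Finset.insert_erase hi]
      exact ZS_insert w n' (Finset.notMem_erase i E)
    -- sum identity for DF
    have hsumDF : ∑ i ∈ E, w i * DF i = 0 := by
      have e : ∀ i ∈ E, w i * DF i
          = (w i * ES w n' (E.erase i) (fun t => F (insert i t))) * ZS w (n'+1) E
            - (w i * ES w n' (E.erase i) (fun t => (1:ℝ))) * ES w (n'+1) E F := by
        intro i hi
        have d1 := hdecES F i hi
        have d2 := hdecZ i hi
        have d3 : ZS w n' (E.erase i) = ES w n' (E.erase i) (fun t => (1:ℝ)) := rfl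
        rw [hDFdef]
        simp only []
        rw [← d3, d1, d2]
        ring
      rw [Finset.sum_congr rfl e, Finset.sum_sub_distrib, ← Finset.sum_mul, ← Finset.sum_mul]
      have c1 : ∑ i ∈ E, w i * ES w n' (E.erase i) (fun t => F (insert i t))
          = (n'+1 : ℝ) * ES w (n'+1) E F := counting w E n' F
      have c2 : ∑ i ∈ E, w i * ES w n' (E.erase i) (fun t => (1:ℝ))
          = (n'+1 : ℝ) * ES w (n'+1) E (fun _ => (1:ℝ)) := counting w E n' (fun _ => (1:ℝ))
      rw [c1, c2]
      have : ES w (n'+1) E (fun _ => (1:ℝ)) = ZS w (n'+1) E := rfl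
      rw [this]
      ring
    -- efron-based sign facts
    have hsignF : ∀ i ∈ E, i ∉ A → DF i ≤ 0 := by
      intro i hiE hiA
      have hwEi : ∀ j ∈ E.erase i, 0 < w j := fun j hj => hw j (Finset.mem_of_mem_erase hj)
      have hFE : ∀ s t : Finset ι, s ⊆ t → t ⊆ E.erase i → F s ≤ F t :=
        fun s t hst htE => hF s t hst (htE.trans (Finset.erase_subset i E))
      have heq2 : ES w n' (E.erase i) (fun t => F (insert i t)) = ES w n' (E.erase i) F := by
        refine Finset.sum_congr rfl fun t ht => ?_
        have htE := (Finset.mem_powersetCard.1 ht).1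
        have h1 : insert i t ⊆ E := Finset.insert_subset hiE (htE.trans (Finset.erase_subset i E))
        have h2 : t ⊆ E := htE.trans (Finset.erase_subset i E)
        have h3 : insert i t ∩ A = t ∩ A := by
          ext j
          simp only [Finset.mem_inter, Finset.mem_insert]
          constructor
          · rintro ⟨rfl | hj, hjA⟩
            · exact absurd hjA hiA
            · exact ⟨hj, hjA⟩
          · rintro ⟨hj, hjA⟩; exact ⟨Or.inr hj, hjA⟩
        show wP w t * F (insert i t) = wP w t * F t
        rw [hFd _ h1, hFd _ h2, h3]
      rw [hDFdef]
      simp only []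
      rw [heq2]
      have := efron w (E.erase i) hwEi F hFE n'
      linarith
    have hsignG : ∀ i ∈ E, i ∉ B → DG i ≤ 0 := by
      intro i hiE hiB
      have hwEi : ∀ j ∈ E.erase i, 0 < w j := fun j hj => hw j (Finset.mem_of_mem_erase hj)
      have hGE : ∀ s t : Finset ι, s ⊆ t → t ⊆ E.erase i → G s ≤ G t :=
        fun s t hst htE => hG s t hst (htE.trans (Finset.erase_subset i E))
      have heq2 : ES w n' (E.erase i) (fun t => G (insert i t)) = ES w n' (E.erase i) G := by
        refine Finset.sum_congr rfl fun t ht => ?_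
        have htE := (Finset.mem_powersetCard.1 ht).1
        have h1 : insert i t ⊆ E := Finset.insert_subset hiE (htE.trans (Finset.erase_subset i E))
        have h2 : t ⊆ E := htE.trans (Finset.erase_subset i E)
        have h3 : insert i t ∩ B = t ∩ B := by
          ext j
          simp only [Finset.mem_inter, Finset.mem_insert]
          constructor
          · rintro ⟨rfl | hj, hjB⟩
            · exact absurd hjB hiB
            · exact ⟨hj, hjB⟩
          · rintro ⟨hj, hjB⟩; exact ⟨Or.inr hj, hjB⟩
        show wP w t * G (insert i t) = wP w t * G t
        rw [hGd _ h1, hGd _ h2, h3]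
      rw [hDGdef]
      simp only []
      rw [heq2]
      have := efron w (E.erase i) hwEi G hGE n'
      linarith
    -- existence of a good pivot
    have hex : ∃ i ∈ E, DF i * DG i ≤ 0 := by
      by_contra hcon
      push_neg at hcon
      have hneg : ∀ i ∈ E, DF i < 0 := by
        intro i hiE
        by_cases hiA : i ∈ A
        · have hiB : i ∉ B := Finset.disjoint_left.1 hAB hiA
          have h1 := hsignG i hiE hiB
          have h2 := hcon i hiE
          rcases lt_or_ge (DF i) 0 with h | h
          · exact h
          · exact absurd h2 (not_lt.2 (mul_nonpos_of_nonneg_of_nonpos h h1))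
        · have h1 := hsignF i hiE hiA
          have h2 := hcon i hiE
          rcases lt_or_ge (DF i) 0 with h | h
          · exact h
          · have : DF i = 0 := le_antisymm h1 h
            rw [this, zero_mul] at h2
            exact absurd h2 (lt_irrefl 0)
      have hEne : E.Nonempty := Finset.card_pos.1 (by omega)
      have : ∑ i ∈ E, w i * DF i < 0 := by
        have := Finset.sum_lt_sum_of_nonempty hEne
          (f := fun i => w i * DF i) (g := fun _ => (0:ℝ))
          (fun i hi => mul_neg_of_pos_of_neg (hw i hi) (hneg i hi))
        simpa using this
      rw [hsumDF] at this
      exact absurd this (lt_irrefl 0)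
    obtain ⟨i, hiE, hDFG⟩ := hex
    -- assemble
    have hiEi : i ∉ E.erase i := Finset.notMem_erase i E
    have hwEi : ∀ j ∈ E.erase i, 0 < w j := fun j hj => hw j (Finset.mem_of_mem_erase hj)
    have hcardEi : (E.erase i).card ≤ m := by
      rw [Finset.card_erase_of_mem hiE]; omega
    have hErs : insert i (E.erase i) = E := Finset.insert_erase hiE
    have hErsub : E.erase i ⊆ E := Finset.erase_subset i E
    -- hypotheses for IH at level n'+1 (functions F, G on E.erase i)
    have hAE' : A.erase i ⊆ E.erase i := Finset.erase_subset_erase i hAE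
    have hBE' : B.erase i ⊆ E.erase i := Finset.erase_subset_erase i hBE
    have hAB' : Disjoint (A.erase i) (B.erase i) :=
      hAB.mono (Finset.erase_subset i A) (Finset.erase_subset i B)
    have hinterA : ∀ s : Finset ι, s ⊆ E.erase i → s ∩ A.erase i = s ∩ A := by
      intro s hs
      ext j
      simp only [Finset.mem_inter, Finset.mem_erase]
      constructor
      · rintro ⟨hj, _, hjA⟩; exact ⟨hj, hjA⟩
      · rintro ⟨hj, hjA⟩
        exact ⟨hj, (Finset.mem_erase.1 (hs hj)).1, hjA⟩
    have hinterB : ∀ s : Finset ι, s ⊆ E.erase i → s ∩ B.erase i = s ∩ B := by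
      intro s hs
      ext j
      simp only [Finset.mem_inter, Finset.mem_erase]
      constructor
      · rintro ⟨hj, _, hjB⟩; exact ⟨hj, hjB⟩
      · rintro ⟨hj, hjB⟩
        exact ⟨hj, (Finset.mem_erase.1 (hs hj)).1, hjB⟩
    have IH1 := IH (E.erase i) hcardEi hwEi (n'+1) (A.erase i) (B.erase i) hAE' hBE' hAB'
      F G
      (fun s hs => by rw [hinterA s hs]; exact hFd s (hs.trans hErsub))
      (fun s hs => by rw [hinterB s hs]; exact hGd s (hs.trans hErsub))
      (fun s t hst htE => hF s t hst (htE.trans hErsub))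
      (fun s t hst htE => hG s t hst (htE.trans hErsub))
    -- hypotheses for IH at level n' with shifted functions
    have hFins : ∀ s : Finset ι, s ⊆ E.erase i →
        F (insert i s) = F (insert i (s ∩ A.erase i)) := by
      intro s hs
      have h1 : insert i s ⊆ E := by rw [← hErs]; exact Finset.insert_subset_insert i hs
      have h2 : insert i (s ∩ A.erase i) ⊆ E := by
        rw [← hErs]
        exact Finset.insert_subset_insert i ((Finset.inter_subset_left).trans hs)
      rw [hFd _ h1, hFd _ h2]
      congr 1
      ext j
      by_cases hji : j = i
      · subst hji; simp
      · simp only [Finset.mem_inter, Finset.mem_insert, Finset.mem_erase]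
        constructor
        · rintro ⟨rfl | hj, hjA⟩
          · exact absurd rfl hji
          · exact ⟨Or.inr ⟨hj, hji, hjA⟩, hjA⟩
        · rintro ⟨rfl | ⟨hj, _, hjA'⟩, hjA⟩
          · exact absurd rfl hji
          · exact ⟨Or.inr hj, hjA⟩
    have hGins : ∀ s : Finset ι, s ⊆ E.erase i →
        G (insert i s) = G (insert i (s ∩ B.erase i)) := by
      intro s hs
      have h1 : insert i s ⊆ E := by rw [← hErs]; exact Finset.insert_subset_insert i hs
      have h2 : insert i (s ∩ B.erase i) ⊆ E := by
        rw [← hErs]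
        exact Finset.insert_subset_insert i ((Finset.inter_subset_left).trans hs)
      rw [hGd _ h1, hGd _ h2]
      congr 1
      ext j
      by_cases hji : j = i
      · subst hji; simp
      · simp only [Finset.mem_inter, Finset.mem_insert, Finset.mem_erase]
        constructor
        · rintro ⟨rfl | hj, hjB⟩
          · exact absurd rfl hji
          · exact ⟨Or.inr ⟨hj, hji, hjB⟩, hjB⟩
        · rintro ⟨rfl | ⟨hj, _, hjB'⟩, hjB⟩
          · exact absurd rfl hji
          · exact ⟨Or.inr hj, hjB⟩
    have IH2 := IH (E.erase i) hcardEi hwEi n' (A.erase i) (B.erase i) hAE' hBE' hAB'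
      (fun t => F (insert i t)) (fun t => G (insert i t))
      (fun s hs => hFins s hs)
      (fun s hs => hGins s hs)
      (fun s t hst htE => hF _ _ (Finset.insert_subset_insert i hst)
        (by rw [← hErs]; exact Finset.insert_subset_insert i htE))
      (fun s t hst htE => hG _ _ (Finset.insert_subset_insert i hst)
        (by rw [← hErs]; exact Finset.insert_subset_insert i htE))
    -- positivity
    have hY0p : 0 < ZS w n' (E.erase i) := by
      apply ZS_pos hwEi
      rw [Finset.card_erase_of_mem hiE]; omega
    have hY1p : 0 < ZS w (n'+1) (E.erase i) := by
      apply ZS_pos hwEi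
      rw [Finset.card_erase_of_mem hiE]; omega
    -- final
    rw [hdecES (fun s => F s * G s) i hiE, hdecES F i hiE, hdecES G i hiE, hdecZ i hiE]
    have hprod : (fun t => F (insert i t) * G (insert i t))
        = (fun t => (fun u => F (insert i u)) t * (fun u => G (insert i u)) t) := rfl
    refine na_core (hw i hiE) hY0p hY1p ?_ ?_ ?_
    · exact IH2
    · exact IH1
    · rw [hDFdef, hDGdef] at hDFG
      simpa using hDFG

end NAcomb

noncomputable def patv {N : ℕ} (s : Finset (Fin N)) : Fin N → ℝ := fun i => if i ∈ s then 1 else 0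

/-- The indicator variables of a rejective sampling scheme are negatively associated. -/
theorem rejective_negAssoc
    {Ω : Type*} [MeasurableSpace Ω] (μ : Measure Ω) [IsProbabilityMeasure μ]
    {N : ℕ} (n : ℕ) (hn1 : 1 ≤ n) (hnN : n ≤ N)
    (p : Fin N → ℝ) (hp : ∀ i, 0 < p i ∧ p i < 1) (hsum : ∑ i, p i = (n : ℝ))
    (ε : Ω → Fin N → ℝ) (hrej : IsRejective μ n p ε) :
    NegAssoc μ (fun i ω => ε ω i) := by
  classical
  obtain ⟨hval, hmeasε, hlaw⟩ := hrej
  intro A₁ A₂ hA12 f g _ _ _ _ hfmono hgmono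
  set D : ℝ := ∑ u ∈ Finset.univ.filter (fun u : Finset (Fin N) => u.card = n), rejWeight p u
    with hDdef
  set e : Finset (Fin N) → Set Ω := fun s => {ω | ∀ i, ε ω i = patv s i} with he
  have hemeas : ∀ s, MeasurableSet (e s) := by
    intro s
    have h1 : e s = ⋂ i, (fun ω => ε ω i) ⁻¹' {patv s i} := by
      ext ω; simp [he, Set.mem_iInter, Set.mem_preimage]
    rw [h1]
    exact MeasurableSet.iInter fun i => (hmeasε i) (measurableSet_singleton _)
  have hpoint : ∀ (H : (Fin N → ℝ) → ℝ) (ω : Ω),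
      H (fun i => ε ω i) = ∑ s : Finset (Fin N), (e s).indicator (fun _ => H (patv s)) ω := by
    intro H ω
    set s₀ : Finset (Fin N) := Finset.univ.filter (fun i => ε ω i = 1) with hs0
    have hωs : ∀ i, ε ω i = patv s₀ i := by
      intro i
      by_cases h1 : ε ω i = 1
      · simp [patv, hs0, h1]
      · rcases hval ω i with h0 | h1'
        · simp [patv, hs0, h0, h1]
        · exact absurd h1' h1
    rw [Finset.sum_eq_single s₀]
    · rw [Set.indicator_of_mem (show ω ∈ e s₀ from hωs)]
      exact congrArg H (funext hωs)
    · intro s _ hne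
      rw [Set.indicator_of_notMem]
      intro hmem
      apply hne
      ext i
      have h2 : patv s i = patv s₀ i := (hmem i).symm.trans (hωs i)
      by_cases h3 : i ∈ s <;> by_cases h4 : i ∈ s₀ <;>
        simp_all [patv]
    · intro h; exact absurd (Finset.mem_univ s₀) h
  have hint : ∀ (H : (Fin N → ℝ) → ℝ),
      ∫ ω, H (fun i => ε ω i) ∂μ = ∑ s : Finset (Fin N), H (patv s) * (μ (e s)).toReal := by
    intro H
    calc ∫ ω, H (fun i => ε ω i) ∂μ
        = ∫ ω, ∑ s : Finset (Fin N), (e s).indicator (fun _ => H (patv s)) ω ∂μ := by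
          congr 1; funext ω; exact hpoint H ω
      _ = ∑ s : Finset (Fin N), ∫ ω, (e s).indicator (fun _ => H (patv s)) ω ∂μ :=
          integral_finset_sum _ (fun s _ => (integrable_const _).indicator (hemeas s))
      _ = ∑ s : Finset (Fin N), H (patv s) * (μ (e s)).toReal := by
          refine Finset.sum_congr rfl fun s _ => ?_
          rw [integral_indicator_const _ (hemeas s), smul_eq_mul, measureReal_def]; ring
  set w : Fin N → ℝ := fun i => p i / (1 - p i) with hwdef
  have hp1 : ∀ i, 0 < 1 - p i := fun i => by linarith [(hp i).2]
  have hwpos : ∀ i : Fin N, 0 < w i := fun i => div_pos (hp i).1 (hp1 i)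
  set c : ℝ := ∏ i, (1 - p i) with hcdef
  have hcpos : 0 < c := Finset.prod_pos fun i _ => hp1 i
  have hrw_eq : ∀ s : Finset (Fin N), rejWeight p s = c * wP w s := by
    intro s
    rw [rejWeight, hcdef, ← Finset.prod_mul_prod_compl s (fun i => 1 - p i), wP]
    rw [mul_comm (∏ i ∈ s, (1 - p i)) (∏ i ∈ sᶜ, (1 - p i)), mul_assoc, ← Finset.prod_mul_distrib]
    have : ∀ i ∈ s, (1 - p i) * w i = p i := by
      intro i _
      show (1 - p i) * (p i / (1 - p i)) = p i
      rw [mul_comm]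
      exact div_mul_cancel₀ (p i) (ne_of_gt (hp1 i))
    rw [Finset.prod_congr rfl this, mul_comm]
  have hrwpos : ∀ s : Finset (Fin N), 0 < rejWeight p s := fun s =>
    mul_pos (Finset.prod_pos fun i _ => (hp i).1) (Finset.prod_pos fun i _ => hp1 i)
  have hfilter : Finset.univ.filter (fun u : Finset (Fin N) => u.card = n)
      = Finset.univ.powersetCard n := by
    ext u; simp [Finset.mem_powersetCard_univ]
  have hDpos : 0 < D := by
    rw [hDdef]
    refine Finset.sum_pos (fun u _ => hrwpos u) ?_
    obtain ⟨t, _, htc⟩ := Finset.exists_subset_card_eq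
      (show n ≤ (Finset.univ : Finset (Fin N)).card by simpa using hnN)
    exact ⟨t, by simp [htc]⟩
  have hμ : ∀ s : Finset (Fin N),
      (μ (e s)).toReal = if s.card = n then rejWeight p s / D else 0 := by
    intro s
    have h1 : μ (e s) = if s.card = n then ENNReal.ofReal (rejWeight p s / D) else 0 := hlaw s
    rw [h1]
    split_ifs with h2
    · exact ENNReal.toReal_ofReal (le_of_lt (div_pos (hrwpos s) hDpos))
    · simp
  -- the three integrals
  have hsum_form : ∀ x : Finset (Fin N) → ℝ,
      (∑ s : Finset (Fin N), x s * (μ (e s)).toReal)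
        = (∑ s ∈ Finset.univ.powersetCard n, x s * rejWeight p s) / D := by
    intro x
    rw [Finset.sum_div, ← hfilter, Finset.sum_filter]
    refine Finset.sum_congr rfl fun s _ => ?_
    rw [hμ s]
    by_cases h2 : s.card = n
    · simp [h2, mul_div_assoc]
    · simp [h2]
  have hES_form : ∀ x : Finset (Fin N) → ℝ,
      (∑ s ∈ Finset.univ.powersetCard n, x s * rejWeight p s) = c * ES w n Finset.univ x := by
    intro x
    rw [ES, Finset.mul_sum]
    refine Finset.sum_congr rfl fun s _ => ?_
    rw [hrw_eq s]; ring
  have hZ_form : D = c * ZS w n Finset.univ := by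
    rw [hDdef, hfilter, ZS_def, Finset.mul_sum]
    exact Finset.sum_congr rfl fun s _ => by rw [hrw_eq s]
  -- NA_comb hypotheses
  set φ : Finset (Fin N) → ℝ := fun s => f (fun i => patv s i.1) with hφdef
  set ψ : Finset (Fin N) → ℝ := fun s => g (fun j => patv s j.1) with hψdef
  have hφd : ∀ s : Finset (Fin N), s ⊆ Finset.univ → φ s = φ (s ∩ A₁) := by
    intro s _
    rw [hφdef]
    refine congrArg f (funext fun i => ?_)
    simp [patv, Finset.mem_inter, i.2]
  have hψd : ∀ s : Finset (Fin N), s ⊆ Finset.univ → ψ s = ψ (s ∩ A₂) := by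
    intro s _
    rw [hψdef]
    refine congrArg g (funext fun j => ?_)
    simp [patv, Finset.mem_inter, j.2]
  have hpatmono : ∀ s t : Finset (Fin N), s ⊆ t → ∀ i, patv s i ≤ patv t i := by
    intro s t hst i
    by_cases h1 : i ∈ s
    · simp [patv, h1, hst h1]
    · simp only [patv, if_neg h1]
      split_ifs <;> norm_num
  have hφmono : ∀ s t : Finset (Fin N), s ⊆ t → t ⊆ Finset.univ → φ s ≤ φ t := by
    intro s t hst _
    exact hfmono fun i => hpatmono s t hst i.1
  have hψmono : ∀ s t : Finset (Fin N), s ⊆ t → t ⊆ Finset.univ → ψ s ≤ ψ t := by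
    intro s t hst _
    exact hgmono fun j => hpatmono s t hst j.1
  have hkey := NA_comb w N Finset.univ (by simp) (fun i _ => hwpos i) n A₁ A₂
    (Finset.subset_univ A₁) (Finset.subset_univ A₂) hA12 φ ψ hφd hψd hφmono hψmono
  -- rewrite the goal
  have e1 : ∫ ω, f (fun i => ε ω i.1) * g (fun j => ε ω j.1) ∂μ
      = ∑ s : Finset (Fin N), (φ s * ψ s) * (μ (e s)).toReal :=
    hint (fun v => f (fun i => v i.1) * g (fun j => v j.1))
  have e2 : ∫ ω, f (fun i => ε ω i.1) ∂μ = ∑ s : Finset (Fin N), φ s * (μ (e s)).toReal :=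
    hint (fun v => f (fun i => v i.1))
  have e3 : ∫ ω, g (fun j => ε ω j.1) ∂μ = ∑ s : Finset (Fin N), ψ s * (μ (e s)).toReal :=
    hint (fun v => g (fun j => v j.1))
  show ∫ ω, f (fun i => ε ω i.1) * g (fun j => ε ω j.1) ∂μ
      ≤ (∫ ω, f (fun i => ε ω i.1) ∂μ) * ∫ ω, g (fun j => ε ω j.1) ∂μ
  rw [e1, e2, e3, hsum_form (fun s => φ s * ψ s), hsum_form φ, hsum_form ψ,
    hES_form (fun s => φ s * ψ s), hES_form φ, hES_form ψ]
  rw [div_mul_div_comm, div_le_div_iff₀ hDpos (mul_pos hDpos hDpos), hZ_form]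
  have hZpos : 0 < ZS w n (Finset.univ : Finset (Fin N)) :=
    ZS_pos (fun i _ => hwpos i) (by simpa using hnN)
  nlinarith [mul_le_mul_of_nonneg_left hkey
    (show (0:ℝ) ≤ c * c * c * ZS w n (Finset.univ : Finset (Fin N)) by positivity)]
end
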